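/- arXiv:1204.2887 — 4 statements merged into one kernel-verified Lean document; each statement's English description precedes it below -/
import Mathlib

section
/- (Jarník) A typical function f ∈ C(I) has the property that D⁺f(x) = D⁻f(x) = ∞ and D₊f(x) = D₋f(x) = −∞ for Lebesgue-almost every x ∈ (0,1). -/
open Filter Topology TopologicalSpace Set MeasureTheory

noncomputable section

/-- The unit interval `I = [0,1]` as a type. -/
abbrev UI : Type := ↥(Set.Icc (0:ℝ) 1)

/-- The space `𝒦` of closed subsets of `I`, with the (extended) Hausdorff metric topology. -/
abbrev KSp : Type := TopologicalSpace.Closeds UI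

/-- The open `r`-neighbourhood of a set `A` within `I`. -/
def nbhd (A : Set UI) (r : ℝ) : Set UI := ⋃ a ∈ A, Metric.ball a r

/-- Upper right Dini derivative `D⁺f(x)`, as an extended real. -/
def DiniSupR (f : UI → ℝ) (x : UI) : EReal :=
  Filter.limsup (fun y : UI => (((f y - f x) / ((y : ℝ) - (x : ℝ))) : EReal)) (𝓝[>] x)

/-- Lower right Dini derivative `D₊f(x)`. -/
def DiniInfR (f : UI → ℝ) (x : UI) : EReal :=
  Filter.liminf (fun y : UI => (((f y - f x) / ((y : ℝ) - (x : ℝ))) : EReal)) (𝓝[>] x)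

/-- Upper left Dini derivative `D⁻f(x)`. -/
def DiniSupL (f : UI → ℝ) (x : UI) : EReal :=
  Filter.limsup (fun y : UI => (((f y - f x) / ((y : ℝ) - (x : ℝ))) : EReal)) (𝓝[<] x)

/-- Lower left Dini derivative `D₋f(x)`. -/
def DiniInfL (f : UI → ℝ) (x : UI) : EReal :=
  Filter.liminf (fun y : UI => (((f y - f x) / ((y : ℝ) - (x : ℝ))) : EReal)) (𝓝[<] x)

/-- `x` is a knot point of `f`. -/
def IsKnotPoint (f : UI → ℝ) (x : UI) : Prop :=
  (0 < (x:ℝ) ∧ (x:ℝ) < 1 ∧ DiniSupR f x = ⊤ ∧ DiniSupL f x = ⊤ ∧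
      DiniInfR f x = ⊥ ∧ DiniInfL f x = ⊥) ∨
  ((x:ℝ) = 0 ∧ DiniSupR f x = ⊤ ∧ DiniInfR f x = ⊥) ∨
  ((x:ℝ) = 1 ∧ DiniSupL f x = ⊤ ∧ DiniInfL f x = ⊥)

/-- `N(f)`: the set of points of `I` that are not knot points of `f`. -/
def NonKnot (f : UI → ℝ) : Set UI := {x | ¬ IsKnotPoint f x}

/-- `S` is an `Fσ` subset of `I`. -/
def IsFsigma (S : Set UI) : Prop :=
  ∃ F : ℕ → Set UI, (∀ n, IsClosed (F n)) ∧ S = ⋃ n, F n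

/-- `N⁺(f,a)`. -/
def NplusUp (f : UI → ℝ) (a : ℝ) : Set UI :=
  {x | (x:ℝ) ≤ 1 - 2^(-a) ∧
    ∀ y : UI, (x:ℝ) ≤ (y:ℝ) → (y:ℝ) ≤ (x:ℝ) + 2^(-a) →
      f y - f x ≤ a * ((y:ℝ) - (x:ℝ))}

/-- `N₊(f,a)`. -/
def NplusLow (f : UI → ℝ) (a : ℝ) : Set UI :=
  {x | (x:ℝ) ≤ 1 - 2^(-a) ∧
    ∀ y : UI, (x:ℝ) ≤ (y:ℝ) → (y:ℝ) ≤ (x:ℝ) + 2^(-a) →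
      -a * ((y:ℝ) - (x:ℝ)) ≤ f y - f x}

/-- `N⁻(f,a)`. -/
def NminusUp (f : UI → ℝ) (a : ℝ) : Set UI :=
  {x | 2^(-a) ≤ (x:ℝ) ∧
    ∀ y : UI, (x:ℝ) - 2^(-a) ≤ (y:ℝ) → (y:ℝ) ≤ (x:ℝ) →
      a * ((y:ℝ) - (x:ℝ)) ≤ f y - f x}

/-- `N₋(f,a)`. -/
def NminusLow (f : UI → ℝ) (a : ℝ) : Set UI :=
  {x | 2^(-a) ≤ (x:ℝ) ∧
    ∀ y : UI, (x:ℝ) - 2^(-a) ≤ (y:ℝ) → (y:ℝ) ≤ (x:ℝ) →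
      f y - f x ≤ -a * ((y:ℝ) - (x:ℝ))}

/-- `N̂(f,a) = N⁺(f,a) ∪ N₋(f,a)`. -/
def Nhat (f : UI → ℝ) (a : ℝ) : Set UI := NplusUp f a ∪ NminusLow f a

/-- `Ň(f,a) = N₊(f,a) ∪ N⁻(f,a)`. -/
def Ncheck (f : UI → ℝ) (a : ℝ) : Set UI := NplusLow f a ∪ NminusUp f a

/-- `N(f,a)`. -/
def NN (f : UI → ℝ) (a : ℝ) : Set UI := Nhat f a ∪ Ncheck f a

/-- `f : I → ℝ` is continuously differentiable on `I`. -/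
def IsC1 (f : UI → ℝ) : Prop :=
  ContDiffOn ℝ 1 (Set.IccExtend (zero_le_one : (0:ℝ) ≤ 1) f) (Set.Icc (0:ℝ) 1)

/-- `φ` is a bump function of height `h` and width `w` located at `H1` and `H2`. -/
def IsBump (φ : C(UI, ℝ)) (h w : ℝ) (H1 H2 : Set UI) : Prop :=
  IsC1 ⇑φ ∧ ‖φ‖ = h ∧ (∀ x ∈ H1, φ x = h) ∧ (∀ x ∈ H2, φ x = -h) ∧
  {x : UI | 0 < φ x} ⊆ nbhd H1 w ∧ {x : UI | φ x < 0} ⊆ nbhd H2 w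

/-- The shifted sequence `n^k`. -/
def shiftSeq (n : ℕ → ℕ) (k : ℕ) : ℕ → ℕ := fun j => n (j + k)

/-- The index set `A_j^m(n) = [n_j] ∪ ⋃_{i=j}^{m-1} {n_i+1, …, n_i+j-1}`. -/
def Aset (n : ℕ → ℕ) (j m : ℕ) : Set ℕ :=
  Set.Icc 1 (n j) ∪ ⋃ i ∈ Set.Ico j m, Set.Icc (n i + 1) (n i + (j - 1))

/-- `n ∈ Z`: sequence of positive integers with `n_{j+1} ≥ n_j + j`. -/
def memZ (n : ℕ → ℕ) : Prop := ∀ j, 1 ≤ j → 1 ≤ n j ∧ n j + j ≤ n (j + 1)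

/-- `δ ∈ Y`: strictly decreasing sequence in `(0,1)` tending to `0`. -/
def memY (δ : ℕ → ℝ) : Prop :=
  (∀ j, 1 ≤ j → 0 < δ j ∧ δ j < 1) ∧ (∀ j, 1 ≤ j → δ (j + 1) < δ j) ∧
    Filter.Tendsto δ Filter.atTop (𝓝 0)

/-- `a ∈ X`: strictly increasing sequence of positive reals tending to `∞`. -/
def memX (a : ℕ → ℝ) : Prop :=
  (∀ j, 1 ≤ j → 0 < a j) ∧ (∀ j, 1 ≤ j → a j < a (j + 1)) ∧
    Filter.Tendsto a Filter.atTop Filter.atTop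

/-- `K ∈ 𝒮_k(n,δ)`. -/
def memS (K : ℕ → KSp) (n : ℕ → ℕ) (δ : ℕ → ℝ) (k : ℕ) : Prop :=
  ∀ j m, 2 ≤ j → j + 1 ≤ m →
    (⋃ i ∈ Aset (shiftSeq n k) j m \ Aset (shiftSeq n k) j (m - 1), (K i : Set UI))
      ⊆ ⋃ i ∈ Aset (shiftSeq n k) (j - 1) (m - 1), nbhd (K i : Set UI) (δ m)

/-- `(K, f, n, δ, a, b) ∈ 𝒴_k`. -/
def memYk (K : ℕ → KSp) (f : C(UI, ℝ)) (n : ℕ → ℕ) (δ : ℕ → ℝ) (a b : ℕ → ℝ)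
    (k : ℕ) : Prop :=
  memZ n ∧ memY δ ∧ memX a ∧ memX b ∧ memS K n δ k ∧
  ∀ j m, 1 ≤ j → j ≤ m →
    NN ⇑f (a j) ⊆ (⋃ i ∈ Aset (shiftSeq n k) j m, nbhd (K i : Set UI) (δ m)) ∧
    (⋃ i ∈ Aset n j m, (K i : Set UI)) ⊆ nbhd (NN ⇑f (b j)) (δ m)

/-- `(K, f) ∈ 𝒳`: the projection of `𝒴 = ⋃_k 𝒴_k` to `𝒦^ℕ × C(I)`. -/
def memXcal (K : ℕ → KSp) (f : C(UI, ℝ)) : Prop :=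
  ∃ n δ a b k, memYk K f n δ a b k

/-! ### Auxiliary machinery for the proof -/

/-- Slack version of `NplusUp`. -/
def AS (f : UI → ℝ) (a η : ℝ) : Set UI :=
  {x | (x:ℝ) ≤ 1 - 2^(-a) ∧
    ∀ y : UI, (x:ℝ) ≤ (y:ℝ) → (y:ℝ) ≤ (x:ℝ) + 2^(-a) →
      f y - f x ≤ a * ((y:ℝ) - (x:ℝ)) + η}
/-- Slack version of `NplusLow`. -/
def BS (f : UI → ℝ) (a η : ℝ) : Set UI :=
  {x | (x:ℝ) ≤ 1 - 2^(-a) ∧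
    ∀ y : UI, (x:ℝ) ≤ (y:ℝ) → (y:ℝ) ≤ (x:ℝ) + 2^(-a) →
      -a * ((y:ℝ) - (x:ℝ)) - η ≤ f y - f x}
/-- Slack version of `NminusUp`. -/
def CS (f : UI → ℝ) (a η : ℝ) : Set UI :=
  {x | 2^(-a) ≤ (x:ℝ) ∧
    ∀ y : UI, (x:ℝ) - 2^(-a) ≤ (y:ℝ) → (y:ℝ) ≤ (x:ℝ) →
      a * ((y:ℝ) - (x:ℝ)) - η ≤ f y - f x}
/-- Slack version of `NminusLow`. -/
def DS (f : UI → ℝ) (a η : ℝ) : Set UI :=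
  {x | 2^(-a) ≤ (x:ℝ) ∧
    ∀ y : UI, (x:ℝ) - 2^(-a) ≤ (y:ℝ) → (y:ℝ) ≤ (x:ℝ) →
      f y - f x ≤ -a * ((y:ℝ) - (x:ℝ)) + η}
/-- Slack version of `NN`. -/
def NNS (f : UI → ℝ) (a η : ℝ) : Set UI := AS f a η ∪ BS f a η ∪ CS f a η ∪ DS f a η

lemma NN_eq_NNS_zero (f : UI → ℝ) (a : ℝ) : NN f a = NNS f a 0 := by
  simp only [NN, NNS, Nhat, Ncheck, AS, BS, CS, DS, NplusUp, NplusLow, NminusUp, NminusLow,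
    add_zero, sub_zero]
  ext x
  simp only [Set.mem_union, Set.mem_setOf_eq]
  tauto

lemma wpos (a : ℝ) : (0:ℝ) < 2^(-a) := Real.rpow_pos_of_pos two_pos _

lemma isClosed_right (F : UI → UI → ℝ) (hF : Continuous fun q : UI × UI => F q.1 q.2)
    (w : ℝ) (hw : 0 < w) :
    IsClosed {x : UI | ∀ y : UI, (x:ℝ) ≤ (y:ℝ) → (y:ℝ) ≤ (x:ℝ) + w → 0 ≤ F x y} := by
  apply IsSeqClosed.isClosed
  intro u L hu hL
  intro y hy1 hy2
  set yn : ℕ → ℝ := fun n => max ((u n : ℝ)) (min (y:ℝ) ((u n : ℝ) + w)) with hyn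
  have hmem : ∀ n, yn n ∈ Set.Icc (0:ℝ) 1 := by
    intro n
    constructor
    · exact le_trans (u n).2.1 (le_max_left _ _)
    · apply max_le (u n).2.2
      exact le_trans (min_le_left _ _) y.2.2
  have hcoe : Tendsto (fun n => (u n : ℝ)) atTop (𝓝 (L:ℝ)) :=
    (continuous_subtype_val.continuousAt.tendsto.comp hL)
  have hylim : Tendsto (fun n => yn n) atTop (𝓝 (max (L:ℝ) (min (y:ℝ) ((L:ℝ) + w)))) := by
    apply Tendsto.max hcoe
    exact Tendsto.min tendsto_const_nhds (hcoe.add tendsto_const_nhds)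
  have hsimp : max (L:ℝ) (min (y:ℝ) ((L:ℝ) + w)) = (y:ℝ) := by
    rw [min_eq_left hy2, max_eq_right hy1]
  rw [hsimp] at hylim
  have hyUI : Tendsto (fun n => (⟨yn n, hmem n⟩ : UI)) atTop (𝓝 y) := by
    rw [tendsto_subtype_rng]; exact hylim
  have key : ∀ n, 0 ≤ F (u n) ⟨yn n, hmem n⟩ := by
    intro n
    exact hu n _ (le_max_left _ _)
      (max_le (by linarith) (min_le_right _ _))
  have : Tendsto (fun n => F (u n) ⟨yn n, hmem n⟩) atTop (𝓝 (F L y)) := by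
    have := hF.continuousAt (x := (L, y)).tendsto
    exact this.comp (hL.prodMk_nhds hyUI)
  exact ge_of_tendsto this (Eventually.of_forall key)

lemma isClosed_left (F : UI → UI → ℝ) (hF : Continuous fun q : UI × UI => F q.1 q.2)
    (w : ℝ) (hw : 0 < w) :
    IsClosed {x : UI | ∀ y : UI, (x:ℝ) - w ≤ (y:ℝ) → (y:ℝ) ≤ (x:ℝ) → 0 ≤ F x y} := by
  apply IsSeqClosed.isClosed
  intro u L hu hL
  intro y hy1 hy2
  set yn : ℕ → ℝ := fun n => min ((u n : ℝ)) (max (y:ℝ) ((u n : ℝ) - w)) with hyn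
  have hmem : ∀ n, yn n ∈ Set.Icc (0:ℝ) 1 := by
    intro n
    constructor
    · exact le_min (u n).2.1 (le_trans y.2.1 (le_max_left _ _))
    · exact le_trans (min_le_left _ _) (u n).2.2
  have hcoe : Tendsto (fun n => (u n : ℝ)) atTop (𝓝 (L:ℝ)) :=
    (continuous_subtype_val.continuousAt.tendsto.comp hL)
  have hylim : Tendsto (fun n => yn n) atTop (𝓝 (min (L:ℝ) (max (y:ℝ) ((L:ℝ) - w)))) :=
    Tendsto.min hcoe (Tendsto.max tendsto_const_nhds (hcoe.sub tendsto_const_nhds))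
  have hsimp : min (L:ℝ) (max (y:ℝ) ((L:ℝ) - w)) = (y:ℝ) := by
    rw [max_eq_left hy1, min_eq_right hy2]
  rw [hsimp] at hylim
  have hyUI : Tendsto (fun n => (⟨yn n, hmem n⟩ : UI)) atTop (𝓝 y) := by
    rw [tendsto_subtype_rng]; exact hylim
  have key : ∀ n, 0 ≤ F (u n) ⟨yn n, hmem n⟩ := by
    intro n
    exact hu n _ (le_min (by linarith) (le_max_right _ _)) (min_le_left _ _)
  have : Tendsto (fun n => F (u n) ⟨yn n, hmem n⟩) atTop (𝓝 (F L y)) := by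
    have := hF.continuousAt (x := (L, y)).tendsto
    exact this.comp (hL.prodMk_nhds hyUI)
  exact ge_of_tendsto this (Eventually.of_forall key)

section ClosedSlack

variable {f : UI → ℝ} {a η : ℝ}

lemma isClosed_AS (hf : Continuous f) : IsClosed (AS f a η) := by
  have h1 : IsClosed {x : UI | (x:ℝ) ≤ 1 - 2^(-a)} :=
    isClosed_le continuous_subtype_val continuous_const
  have h2 := isClosed_right (fun x y => a * ((y:ℝ) - (x:ℝ)) + η - (f y - f x))
    (by fun_prop) _ (wpos a)
  have : AS f a η = {x : UI | (x:ℝ) ≤ 1 - 2^(-a)} ∩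
      {x : UI | ∀ y : UI, (x:ℝ) ≤ (y:ℝ) → (y:ℝ) ≤ (x:ℝ) + 2^(-a) →
        0 ≤ a * ((y:ℝ) - (x:ℝ)) + η - (f y - f x)} := by
    ext x
    simp only [AS, Set.mem_inter_iff, Set.mem_setOf_eq, sub_nonneg]
  rw [this]; exact h1.inter h2

lemma isClosed_BS (hf : Continuous f) : IsClosed (BS f a η) := by
  have h1 : IsClosed {x : UI | (x:ℝ) ≤ 1 - 2^(-a)} :=
    isClosed_le continuous_subtype_val continuous_const
  have h2 := isClosed_right (fun x y => f y - f x - (-a * ((y:ℝ) - (x:ℝ)) - η))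
    (by fun_prop) _ (wpos a)
  have : BS f a η = {x : UI | (x:ℝ) ≤ 1 - 2^(-a)} ∩
      {x : UI | ∀ y : UI, (x:ℝ) ≤ (y:ℝ) → (y:ℝ) ≤ (x:ℝ) + 2^(-a) →
        0 ≤ f y - f x - (-a * ((y:ℝ) - (x:ℝ)) - η)} := by
    ext x
    simp only [BS, Set.mem_inter_iff, Set.mem_setOf_eq, sub_nonneg]
  rw [this]; exact h1.inter h2

lemma isClosed_CS (hf : Continuous f) : IsClosed (CS f a η) := by
  have h1 : IsClosed {x : UI | 2^(-a) ≤ (x:ℝ)} :=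
    isClosed_le continuous_const continuous_subtype_val
  have h2 := isClosed_left (fun x y => f y - f x - (a * ((y:ℝ) - (x:ℝ)) - η))
    (by fun_prop) _ (wpos a)
  have : CS f a η = {x : UI | 2^(-a) ≤ (x:ℝ)} ∩
      {x : UI | ∀ y : UI, (x:ℝ) - 2^(-a) ≤ (y:ℝ) → (y:ℝ) ≤ (x:ℝ) →
        0 ≤ f y - f x - (a * ((y:ℝ) - (x:ℝ)) - η)} := by
    ext x
    simp only [CS, Set.mem_inter_iff, Set.mem_setOf_eq, sub_nonneg]
  rw [this]; exact h1.inter h2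

lemma isClosed_DS (hf : Continuous f) : IsClosed (DS f a η) := by
  have h1 : IsClosed {x : UI | 2^(-a) ≤ (x:ℝ)} :=
    isClosed_le continuous_const continuous_subtype_val
  have h2 := isClosed_left (fun x y => -a * ((y:ℝ) - (x:ℝ)) + η - (f y - f x))
    (by fun_prop) _ (wpos a)
  have : DS f a η = {x : UI | 2^(-a) ≤ (x:ℝ)} ∩
      {x : UI | ∀ y : UI, (x:ℝ) - 2^(-a) ≤ (y:ℝ) → (y:ℝ) ≤ (x:ℝ) →
        0 ≤ -a * ((y:ℝ) - (x:ℝ)) + η - (f y - f x)} := by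
    ext x
    simp only [DS, Set.mem_inter_iff, Set.mem_setOf_eq, sub_nonneg]
  rw [this]; exact h1.inter h2

lemma isClosed_NNS (hf : Continuous f) : IsClosed (NNS f a η) :=
  (((isClosed_AS hf).union (isClosed_BS hf)).union (isClosed_CS hf)).union (isClosed_DS hf)

lemma AS_mono {η η' : ℝ} (h : η ≤ η') : AS f a η ⊆ AS f a η' := by
  intro x hx
  exact ⟨hx.1, fun y h1 h2 => le_trans (hx.2 y h1 h2) (by linarith)⟩
lemma BS_mono {η η' : ℝ} (h : η ≤ η') : BS f a η ⊆ BS f a η' := by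
  intro x hx
  exact ⟨hx.1, fun y h1 h2 => le_trans (by linarith) (hx.2 y h1 h2)⟩
lemma CS_mono {η η' : ℝ} (h : η ≤ η') : CS f a η ⊆ CS f a η' := by
  intro x hx
  exact ⟨hx.1, fun y h1 h2 => le_trans (by linarith) (hx.2 y h1 h2)⟩
lemma DS_mono {η η' : ℝ} (h : η ≤ η') : DS f a η ⊆ DS f a η' := by
  intro x hx
  exact ⟨hx.1, fun y h1 h2 => le_trans (hx.2 y h1 h2) (by linarith)⟩

lemma NNS_mono {η η' : ℝ} (h : η ≤ η') : NNS f a η ⊆ NNS f a η' :=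
  Set.union_subset_union (Set.union_subset_union
    (Set.union_subset_union (AS_mono h) (BS_mono h)) (CS_mono h)) (DS_mono h)

end ClosedSlack


/-- The grid `pℤ`. -/
def grid (p : ℝ) : Set ℝ := Set.range (fun k : ℤ => (k:ℝ) * p)

/-- Sawtooth wave of period `p` and amplitude `h`. -/
def saw (p h : ℝ) : ℝ → ℝ := fun x => (2*h/p) * Metric.infDist x (grid p)

lemma grid_nonempty (p : ℝ) : (grid p).Nonempty := ⟨0, ⟨0, by simp⟩⟩

lemma continuous_saw (p h : ℝ) : Continuous (saw p h) :=
  continuous_const.mul (Metric.continuous_infDist_pt _)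

section SawFacts
variable {p h : ℝ} (hp : 0 < p) (hh : 0 < h)
include hp

lemma floor_mul_le (x : ℝ) : (⌊x/p⌋ : ℝ) * p ≤ x := by
  rw [← le_div_iff₀ hp]; exact Int.floor_le _

lemma lt_floor_add_one_mul (x : ℝ) : x < ((⌊x/p⌋ : ℝ) + 1) * p := by
  rw [← div_lt_iff₀ hp]; exact Int.lt_floor_add_one _

lemma min_le_infDist (x : ℝ) :
    min (x - (⌊x/p⌋ : ℝ) * p) ((⌊x/p⌋ : ℝ) * p + p - x) ≤ Metric.infDist x (grid p) := by
  by_contra hcon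
  push_neg at hcon
  obtain ⟨y, ⟨k, rfl⟩, hy⟩ := (Metric.infDist_lt_iff (grid_nonempty p)).1 hcon
  rw [Real.dist_eq] at hy
  rcases le_or_gt k ⌊x/p⌋ with hk | hk
  · have h1 : (k:ℝ) * p ≤ (⌊x/p⌋:ℝ) * p :=
      mul_le_mul_of_nonneg_right (by exact_mod_cast hk) hp.le
    have h2 := floor_mul_le hp x
    have : |x - (k:ℝ)*p| = x - (k:ℝ)*p := abs_of_nonneg (by linarith)
    rw [this] at hy
    have := min_le_left (x - (⌊x/p⌋ : ℝ) * p) ((⌊x/p⌋ : ℝ) * p + p - x)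
    linarith
  · have hk' : (⌊x/p⌋:ℝ) + 1 ≤ (k:ℝ) := by exact_mod_cast hk
    have h1 : ((⌊x/p⌋:ℝ) + 1) * p ≤ (k:ℝ) * p :=
      mul_le_mul_of_nonneg_right hk' hp.le
    have h2 := lt_floor_add_one_mul hp x
    have : |x - (k:ℝ)*p| = (k:ℝ)*p - x := by
      rw [abs_sub_comm]; exact abs_of_nonneg (by nlinarith)
    rw [this] at hy
    have := min_le_right (x - (⌊x/p⌋ : ℝ) * p) ((⌊x/p⌋ : ℝ) * p + p - x)
    nlinarith

lemma infDist_le_left (x : ℝ) : Metric.infDist x (grid p) ≤ x - (⌊x/p⌋ : ℝ) * p := by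
  have hm : ((⌊x/p⌋:ℝ) * p) ∈ grid p := ⟨⌊x/p⌋, rfl⟩
  have := Metric.infDist_le_dist_of_mem (x := x) hm
  rwa [Real.dist_eq, abs_of_nonneg (by linarith [floor_mul_le hp x])] at this

lemma infDist_le_right (x : ℝ) : Metric.infDist x (grid p) ≤ (⌊x/p⌋ : ℝ) * p + p - x := by
  have hm : (((⌊x/p⌋:ℝ)+1) * p) ∈ grid p := ⟨⌊x/p⌋ + 1, by push_cast; ring⟩
  have := Metric.infDist_le_dist_of_mem (x := x) hm
  rw [Real.dist_eq, abs_sub_comm, abs_of_nonneg (by nlinarith [lt_floor_add_one_mul hp x])] at this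
  linarith

lemma infDist_le_half (x : ℝ) : Metric.infDist x (grid p) ≤ p / 2 := by
  have hmem : ((round (x/p) : ℝ)) * p ∈ grid p := ⟨round (x/p), rfl⟩
  have h1 := Metric.infDist_le_dist_of_mem (x := x) hmem
  rw [Real.dist_eq] at h1
  have h2 : |x - (round (x/p):ℝ) * p| = |x/p - round (x/p)| * p := by
    have he : x - (round (x/p):ℝ) * p = (x/p - round (x/p)) * p := by field_simp
    rw [he, abs_mul, abs_of_pos hp]
  have h3 := abs_sub_round (x/p)
  calc Metric.infDist x (grid p) ≤ |x/p - round (x/p)| * p := by rw [← h2]; exact h1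
    _ ≤ (1/2) * p := mul_le_mul_of_nonneg_right h3 hp.le
    _ = p/2 := by ring

include hh

lemma saw_nonneg (x : ℝ) : 0 ≤ saw p h x :=
  mul_nonneg (by positivity) Metric.infDist_nonneg

lemma saw_le (x : ℝ) : saw p h x ≤ h := by
  have := infDist_le_half hp (x := x)
  calc saw p h x ≤ (2*h/p) * (p/2) :=
        mul_le_mul_of_nonneg_left this (by positivity)
    _ = h := by field_simp

lemma saw_grid (k : ℤ) : saw p h ((k:ℝ) * p) = 0 := by
  have hm : ((k:ℝ) * p) ∈ grid p := ⟨k, rfl⟩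
  unfold saw
  rw [Metric.infDist_zero_of_mem hm, mul_zero]

lemma saw_halfgrid (k : ℤ) : saw p h ((k:ℝ) * p + p/2) = h := by
  have hfloor : ⌊((k:ℝ) * p + p/2)/p⌋ = k := by
    have : ((k:ℝ) * p + p/2)/p = (k:ℝ) + 1/2 := by field_simp
    rw [this, Int.floor_intCast_add]
    norm_num
  have hle := min_le_infDist hp ((k:ℝ) * p + p/2)
  rw [hfloor] at hle
  have hmin : min ((k:ℝ) * p + p/2 - (k:ℝ)*p) ((k:ℝ)*p + p - ((k:ℝ) * p + p/2)) = p/2 := by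
    rw [show (k:ℝ) * p + p/2 - (k:ℝ)*p = p/2 by ring, show (k:ℝ)*p + p - ((k:ℝ) * p + p/2) = p/2 by ring,
      min_self]
  rw [show (k:ℝ)*p + p - ((k:ℝ) * p + p/2) = p/2 by ring] at hle
  rw [show (k:ℝ) * p + p/2 - (k:ℝ)*p = p/2 by ring, min_self] at hle
  have hge := infDist_le_half hp (x := (k:ℝ) * p + p/2)
  have : Metric.infDist ((k:ℝ) * p + p/2) (grid p) = p/2 := le_antisymm hge hle
  unfold saw
  rw [this]
  field_simp

/-- the "bad set" estimate -/
lemma saw_bad_subset {c : ℝ} (hc : 0 ≤ c) :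
    {x : ℝ | x ∈ Set.Icc (0:ℝ) 1 ∧ (saw p h x ≤ c ∨ h - c ≤ saw p h x)} ⊆
      ⋃ j ∈ Finset.Icc (0:ℤ) (⌊2/p⌋+2),
        Set.Icc ((j:ℝ)*p/2 - c*p/(2*h)) ((j:ℝ)*p/2 + c*p/(2*h)) := by
  intro x ⟨⟨hx0, hx1⟩, hbad⟩
  set t := c*p/(2*h) with ht
  have ht0 : 0 ≤ t := by positivity
  set k := ⌊x/p⌋ with hk
  have hk0 : 0 ≤ k := Int.floor_nonneg.2 (by positivity)
  have hkle : (k:ℝ) ≤ 1/p := by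
    calc (k:ℝ) ≤ x/p := Int.floor_le _
      _ ≤ 1/p := by gcongr
  have hfl := floor_mul_le hp x
  have hfr := lt_floor_add_one_mul hp x
  have hjmem : ∀ j : ℤ, 0 ≤ j → (j:ℝ) ≤ 2*(k:ℝ) + 2 → |x - (j:ℝ)*p/2| ≤ t →
      x ∈ ⋃ j ∈ Finset.Icc (0:ℤ) (⌊2/p⌋+2),
        Set.Icc ((j:ℝ)*p/2 - t) ((j:ℝ)*p/2 + t) := by
    intro j hj0 hjle hjx
    apply Set.mem_biUnion (show j ∈ Finset.Icc (0:ℤ) (⌊2/p⌋+2) from ?_)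
    · rw [Set.mem_Icc]
      rw [abs_le] at hjx
      constructor <;> linarith
    · rw [Finset.mem_Icc]
      refine ⟨hj0, ?_⟩
      have : (j:ℝ) - 2 ≤ 2/p := by
        have : 2*(k:ℝ) ≤ 2/p := by
          rw [div_eq_mul_one_div]
          linarith
        linarith
      have : j - 2 ≤ ⌊2/p⌋ := Int.le_floor.2 (by push_cast; linarith)
      linarith
  have hd2saw : saw p h x = (2*h/p) * Metric.infDist x (grid p) := rfl
  have hdpos : 0 < 2*h/p := by positivity
  rcases hbad with hlow | hhigh
  · -- infDist ≤ t
    have hdt : Metric.infDist x (grid p) ≤ t := by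
      rw [hd2saw] at hlow
      have hkey : (2*h/p) * Metric.infDist x (grid p) * p ≤ c * p :=
        mul_le_mul_of_nonneg_right hlow hp.le
      have hkey2 : 2*h * Metric.infDist x (grid p) ≤ c * p := by
        have : (2*h/p) * Metric.infDist x (grid p) * p = 2*h*Metric.infDist x (grid p) := by
          field_simp
        linarith [hkey, this.symm.le]
      rw [ht, le_div_iff₀ (by positivity : (0:ℝ) < 2*h)]
      linarith
    have hmin := min_le_infDist hp x
    rcases le_total (x - (k:ℝ)*p) ((k:ℝ)*p + p - x) with hcase | hcase
    · rw [min_eq_left hcase] at hmin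
      apply hjmem (2*k) (by linarith) (by push_cast; linarith)
      have : |x - (2*(k:ℝ))*p/2| = x - (k:ℝ)*p := by
        rw [show (2*(k:ℝ))*p/2 = (k:ℝ)*p by ring]
        exact abs_of_nonneg (by linarith)
      push_cast at this ⊢
      rw [this]
      linarith
    · rw [min_eq_right hcase] at hmin
      apply hjmem (2*k+2) (by linarith) (by push_cast; linarith)
      have : |x - ((2*(k:ℝ)+2))*p/2| = (k:ℝ)*p + p - x := by
        rw [show ((2*(k:ℝ)+2))*p/2 = (k:ℝ)*p + p by ring, abs_sub_comm]
        exact abs_of_nonneg (by linarith)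
      push_cast at this ⊢
      rw [this]
      linarith
  · -- infDist ≥ p/2 - t
    have hdt : p/2 - t ≤ Metric.infDist x (grid p) := by
      rw [hd2saw] at hhigh
      by_contra hcon
      push_neg at hcon
      have : (2*h/p) * Metric.infDist x (grid p) < (2*h/p) * (p/2 - t) :=
        mul_lt_mul_of_pos_left hcon hdpos
      have heq : (2*h/p) * (p/2 - t) = h - c := by
        rw [ht]; field_simp
      linarith
    have h1 := infDist_le_left hp (x := x)
    have h2 := infDist_le_right hp (x := x)
    apply hjmem (2*k+1) (by linarith) (by push_cast; linarith)
    rw [abs_le]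
    push_cast
    constructor <;> nlinarith
end SawFacts

section Slack2

variable {f g : UI → ℝ} {a : ℝ}

lemma not_AS_of_not (h : x ∉ NplusUp f a) : ∃ N : ℕ, ∀ n ≥ N, x ∉ AS f a (1/(n+1)) := by
  by_cases hb : (x:ℝ) ≤ 1 - 2^(-a)
  · have h2 : ∃ y : UI, (x:ℝ) ≤ (y:ℝ) ∧ (y:ℝ) ≤ (x:ℝ) + 2^(-a) ∧
        a * ((y:ℝ) - (x:ℝ)) < f y - f x := by
      by_contra hc
      push_neg at hc
      exact h ⟨hb, fun y h1 h2 => hc y h1 h2⟩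
    obtain ⟨y, hy1, hy2, hy3⟩ := h2
    obtain ⟨N, hN⟩ := exists_nat_one_div_lt (sub_pos.2 hy3)
    refine ⟨N, fun n hn hx => ?_⟩
    have h4 := hx.2 y hy1 hy2
    have h5 : (1:ℝ)/(n+1) ≤ 1/(N+1) := by
      apply one_div_le_one_div_of_le (by positivity)
      have : (N:ℝ) ≤ n := Nat.cast_le.2 hn
      linarith
    linarith
  · exact ⟨0, fun n _ hx => hb hx.1⟩

lemma not_BS_of_not (h : x ∉ NplusLow f a) : ∃ N : ℕ, ∀ n ≥ N, x ∉ BS f a (1/(n+1)) := by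
  by_cases hb : (x:ℝ) ≤ 1 - 2^(-a)
  · have h2 : ∃ y : UI, (x:ℝ) ≤ (y:ℝ) ∧ (y:ℝ) ≤ (x:ℝ) + 2^(-a) ∧
        f y - f x < -a * ((y:ℝ) - (x:ℝ)) := by
      by_contra hc
      push_neg at hc
      exact h ⟨hb, fun y h1 h2 => hc y h1 h2⟩
    obtain ⟨y, hy1, hy2, hy3⟩ := h2
    obtain ⟨N, hN⟩ := exists_nat_one_div_lt (sub_pos.2 hy3)
    refine ⟨N, fun n hn hx => ?_⟩
    have h4 := hx.2 y hy1 hy2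
    have h5 : (1:ℝ)/(n+1) ≤ 1/(N+1) := by
      apply one_div_le_one_div_of_le (by positivity)
      have : (N:ℝ) ≤ n := Nat.cast_le.2 hn
      linarith
    linarith
  · exact ⟨0, fun n _ hx => hb hx.1⟩

lemma not_CS_of_not (h : x ∉ NminusUp f a) : ∃ N : ℕ, ∀ n ≥ N, x ∉ CS f a (1/(n+1)) := by
  by_cases hb : 2^(-a) ≤ (x:ℝ)
  · have h2 : ∃ y : UI, (x:ℝ) - 2^(-a) ≤ (y:ℝ) ∧ (y:ℝ) ≤ (x:ℝ) ∧
        f y - f x < a * ((y:ℝ) - (x:ℝ)) := by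
      by_contra hc
      push_neg at hc
      exact h ⟨hb, fun y h1 h2 => hc y h1 h2⟩
    obtain ⟨y, hy1, hy2, hy3⟩ := h2
    obtain ⟨N, hN⟩ := exists_nat_one_div_lt (sub_pos.2 hy3)
    refine ⟨N, fun n hn hx => ?_⟩
    have h4 := hx.2 y hy1 hy2
    have h5 : (1:ℝ)/(n+1) ≤ 1/(N+1) := by
      apply one_div_le_one_div_of_le (by positivity)
      have : (N:ℝ) ≤ n := Nat.cast_le.2 hn
      linarith
    linarith
  · exact ⟨0, fun n _ hx => hb hx.1⟩

lemma not_DS_of_not (h : x ∉ NminusLow f a) : ∃ N : ℕ, ∀ n ≥ N, x ∉ DS f a (1/(n+1)) := by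
  by_cases hb : 2^(-a) ≤ (x:ℝ)
  · have h2 : ∃ y : UI, (x:ℝ) - 2^(-a) ≤ (y:ℝ) ∧ (y:ℝ) ≤ (x:ℝ) ∧
        -a * ((y:ℝ) - (x:ℝ)) < f y - f x := by
      by_contra hc
      push_neg at hc
      exact h ⟨hb, fun y h1 h2 => hc y h1 h2⟩
    obtain ⟨y, hy1, hy2, hy3⟩ := h2
    obtain ⟨N, hN⟩ := exists_nat_one_div_lt (sub_pos.2 hy3)
    refine ⟨N, fun n hn hx => ?_⟩
    have h4 := hx.2 y hy1 hy2
    have h5 : (1:ℝ)/(n+1) ≤ 1/(N+1) := by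
      apply one_div_le_one_div_of_le (by positivity)
      have : (N:ℝ) ≤ n := Nat.cast_le.2 hn
      linarith
    linarith
  · exact ⟨0, fun n _ hx => hb hx.1⟩

lemma iInter_NNS_subset (f : UI → ℝ) (a : ℝ) :
    (⋂ n : ℕ, NNS f a (1/(n+1))) ⊆ NN f a := by
  intro x hx
  by_contra hnot
  have hA : x ∉ NplusUp f a := fun h => hnot (Or.inl (Or.inl h))
  have hD : x ∉ NminusLow f a := fun h => hnot (Or.inl (Or.inr h))
  have hB : x ∉ NplusLow f a := fun h => hnot (Or.inr (Or.inl h))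
  have hC : x ∉ NminusUp f a := fun h => hnot (Or.inr (Or.inr h))
  obtain ⟨NA, hNA⟩ := not_AS_of_not hA
  obtain ⟨NB, hNB⟩ := not_BS_of_not hB
  obtain ⟨NC, hNC⟩ := not_CS_of_not hC
  obtain ⟨ND, hND⟩ := not_DS_of_not hD
  set N := max (max NA NB) (max NC ND) with hN
  have hxN : x ∈ NNS f a (1/(N+1)) := Set.mem_iInter.1 hx N
  rcases hxN with ((h | h) | h) | h
  · exact hNA N (le_trans (le_max_left _ _) (le_max_left _ _)) h
  · exact hNB N (le_trans (le_max_right _ _) (le_max_left _ _)) h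
  · exact hNC N (le_trans (le_max_left _ _) (le_max_right _ _)) h
  · exact hND N (le_trans (le_max_right _ _) (le_max_right _ _)) h

lemma NN_subset_NNS_of_close {η : ℝ} (hd : ∀ x : UI, |g x - f x| ≤ η/2) :
    NN g a ⊆ NNS f a η := by
  rintro x (((⟨h1, h2⟩ | ⟨h1, h2⟩) | (⟨h1, h2⟩ | ⟨h1, h2⟩)))
  · refine Or.inl (Or.inl (Or.inl ⟨h1, fun y hy1 hy2 => ?_⟩))
    have := h2 y hy1 hy2
    have e1 := abs_le.1 (hd x); have e2 := abs_le.1 (hd y)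
    linarith
  · -- NminusLow g ⊆ DS
    refine Or.inr ⟨h1, fun y hy1 hy2 => ?_⟩
    have := h2 y hy1 hy2
    have e1 := abs_le.1 (hd x); have e2 := abs_le.1 (hd y)
    linarith
  · -- NplusLow g ⊆ BS
    refine Or.inl (Or.inl (Or.inr ⟨h1, fun y hy1 hy2 => ?_⟩))
    have := h2 y hy1 hy2
    have e1 := abs_le.1 (hd x); have e2 := abs_le.1 (hd y)
    linarith
  · -- NminusUp g ⊆ CS
    refine Or.inl (Or.inr ⟨h1, fun y hy1 hy2 => ?_⟩)
    have := h2 y hy1 hy2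
    have e1 := abs_le.1 (hd x); have e2 := abs_le.1 (hd y)
    linarith

end Slack2

/-- The basic open sets. -/
def GSet (a : ℝ) (ε : ENNReal) : Set C(UI, ℝ) :=
  {f | volume (Subtype.val '' NN ⇑f a) < ε}

lemma isOpen_GSet (a : ℝ) (ε : ENNReal) : IsOpen (GSet a ε) := by
  rw [Metric.isOpen_iff]
  intro f hf
  obtain ⟨U, hAU, hUopen, hUlt⟩ := exists_isOpen_lt_of_lt _ _ hf
  set V : Set UI := Subtype.val ⁻¹' U with hV
  have hNNV : NN ⇑f a ⊆ V := fun x hx => hAU (Set.mem_image_of_mem _ hx)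
  have hVc : IsCompact Vᶜ :=
    ((hUopen.preimage continuous_subtype_val).isClosed_compl).isCompact
  have hinter : Vᶜ ∩ ⋂ n : ℕ, NNS ⇑f a (1/(n+1)) = ∅ := by
    rw [Set.eq_empty_iff_forall_notMem]
    rintro z ⟨hz1, hz2⟩
    exact hz1 (hNNV (iInter_NNS_subset _ _ hz2))
  obtain ⟨u, hu⟩ := hVc.elim_finite_subfamily_closed _
    (fun n => isClosed_NNS (f := ⇑f) f.continuous) hinter
  set N := u.sup id with hNdef
  have hsub : NNS ⇑f a (1/(N+1)) ⊆ V := by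
    intro z hz
    by_contra hzV
    have hzmem : z ∈ Vᶜ ∩ ⋂ n ∈ u, NNS ⇑f a (1/(n+1)) := by
      refine ⟨hzV, Set.mem_biInter fun i hi => ?_⟩
      refine NNS_mono ?_ hz
      apply one_div_le_one_div_of_le (by positivity)
      have : (i:ℝ) ≤ N := Nat.cast_le.2 (Finset.le_sup (f := id) hi)
      linarith
    rw [hu] at hzmem
    exact hzmem
  refine ⟨(1/(N+1))/2, by positivity, fun g hg => ?_⟩
  have hd : ∀ x : UI, |g x - f x| ≤ (1/(N+1))/2 := by
    intro x
    rw [← Real.dist_eq]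
    exact le_trans (ContinuousMap.dist_apply_le_dist x) (le_of_lt (Metric.mem_ball.1 hg))
  have : NN ⇑g a ⊆ V := le_trans (NN_subset_NNS_of_close hd) hsub
  calc volume (Subtype.val '' NN ⇑g a) ≤ volume U := by
        apply measure_mono
        rintro _ ⟨z, hz, rfl⟩
        exact this hz
    _ < ε := hUlt

set_option maxHeartbeats 1000000 in
lemma dense_GSet {a : ℝ} (ha : 0 ≤ a) {ε : ENNReal} (hε : 0 < ε) : Dense (GSet a ε) := by
  rw [Metric.dense_iff]
  intro f r hr
  obtain ⟨ε', hε'pos, hε'lt⟩ : ∃ ε' : ℝ, 0 < ε' ∧ ENNReal.ofReal ε' < ε := by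
    rcases eq_or_ne ε ⊤ with rfl | hne
    · exact ⟨1, one_pos, ENNReal.ofReal_lt_top⟩
    · have := ENNReal.toReal_pos hε.ne' hne
      refine ⟨ε.toReal/2, by linarith, ?_⟩
      rw [ENNReal.ofReal_lt_iff_lt_toReal (by linarith) hne]
      linarith
  set amp := r/2 with hamp
  have hamp0 : 0 < amp := by positivity
  set ω := amp * ε' / 20 with hω
  have hω0 : 0 < ω := by positivity
  obtain ⟨δ, hδ0, hδ⟩ := Metric.uniformContinuous_iff.1
    (CompactSpace.uniformContinuous_of_continuous f.continuous) ω hω0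
  set p := min (δ/2) (min 1 (min (2^(-a)) (amp * ε' / (20*(a+1))))) with hpdef
  have hwa := wpos a
  have hp0 : 0 < p := by
    refine lt_min (by positivity) (lt_min one_pos (lt_min hwa (by positivity)))
  have hpδ : p < δ := lt_of_le_of_lt (min_le_left _ _) (by linarith)
  have hp1 : p ≤ 1 := le_trans (min_le_right _ _) (min_le_left _ _)
  have hpw : p ≤ 2^(-a) :=
    le_trans (min_le_right _ _) (le_trans (min_le_right _ _) (min_le_left _ _))
  have hpa : a * p ≤ amp * ε' / 20 := by
    have h1 : p ≤ amp * ε'/(20*(a+1)) :=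
      le_trans (min_le_right _ _) (le_trans (min_le_right _ _) (min_le_right _ _))
    calc a * p ≤ (a+1) * (amp * ε'/(20*(a+1))) :=
          mul_le_mul (by linarith) h1 hp0.le (by linarith)
      _ = amp * ε'/20 := by field_simp
  set c := a * p + ω with hc
  have hc0 : 0 ≤ c := by positivity
  have hcle : c ≤ amp * ε' / 10 := by rw [hc, hω]; linarith
  -- uniform continuity in the subtype
  have hfsmall : ∀ u v : UI, |(u:ℝ) - (v:ℝ)| ≤ p → |f u - f v| ≤ ω := by
    intro u v huv
    have : dist u v < δ := by
      rw [Subtype.dist_eq, Real.dist_eq]; linarith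
    have := hδ this
    rw [Real.dist_eq] at this
    linarith
  -- the perturbed function
  set sw : UI → ℝ := fun x => saw p amp (x:ℝ) with hsw
  have hswc : Continuous sw := (continuous_saw p amp).comp continuous_subtype_val
  set g : C(UI,ℝ) := ⟨fun x => f x + sw x, f.continuous.add hswc⟩ with hgdef
  have hgx : ∀ x : UI, g x = f x + saw p amp (x:ℝ) := fun x => rfl
  have hball : g ∈ Metric.ball f r := by
    rw [Metric.mem_ball, ContinuousMap.dist_lt_iff hr]
    intro x
    rw [Real.dist_eq]
    have he : g x - f x = saw p amp (x:ℝ) := by rw [hgx]; ring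
    rw [he]
    have h1 := saw_nonneg hp0 hamp0 (x:ℝ)
    have h2 := saw_le hp0 hamp0 (x:ℝ)
    rw [abs_lt]
    constructor <;> linarith
  refine ⟨g, Set.mem_inter hball ?_⟩
  -- the key inclusion
  have hkey : Subtype.val '' NN ⇑g a ⊆
      {x : ℝ | x ∈ Set.Icc (0:ℝ) 1 ∧ (saw p amp x ≤ c ∨ amp - c ≤ saw p amp x)} := by
    rintro _ ⟨x, hx, rfl⟩
    refine ⟨x.2, ?_⟩
    rcases hx with ((⟨h1, h2⟩ | ⟨h1, h2⟩) | (⟨h1, h2⟩ | ⟨h1, h2⟩))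
    · -- NplusUp : right peak
      right
      set P := ((⌈((x:ℝ) - p/2)/p⌉ : ℝ))*p + p/2 with hP
      have hxP : (x:ℝ) ≤ P := by
        have := Int.le_ceil (((x:ℝ) - p/2)/p)
        rw [div_le_iff₀ hp0] at this
        rw [hP]; linarith
      have hPx : P < (x:ℝ) + p := by
        have := Int.ceil_lt_add_one (((x:ℝ) - p/2)/p)
        have h' : ((⌈((x:ℝ) - p/2)/p⌉ : ℝ)) * p < (((x:ℝ) - p/2)/p + 1) * p :=
          mul_lt_mul_of_pos_right this hp0
        rw [hP]
        have : (((x:ℝ) - p/2)/p + 1) * p = (x:ℝ) - p/2 + p := by field_simp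
        linarith
      have hPmem : P ∈ Set.Icc (0:ℝ) 1 := ⟨le_trans x.2.1 hxP, by linarith⟩
      set Py : UI := ⟨P, hPmem⟩ with hPy
      have hPcoe : (Py : ℝ) = P := rfl
      have hcond := h2 Py (by rw [hPcoe]; linarith) (by rw [hPcoe]; linarith)
      rw [hgx, hgx, hPcoe] at hcond
      have hsawP : saw p amp P = amp := by rw [hP]; exact saw_halfgrid hp0 hamp0 _
      rw [hsawP] at hcond
      have hfb := hfsmall Py x (by rw [hPcoe, abs_le]; constructor <;> linarith)
      have haP : a * (P - (x:ℝ)) ≤ a * p := mul_le_mul_of_nonneg_left (by linarith) ha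
      have := abs_le.1 hfb
      rw [hc]
      linarith
    · -- NminusLow : left peak
      right
      set P := ((⌊((x:ℝ) - p/2)/p⌋ : ℝ))*p + p/2 with hP
      have hxP : P ≤ (x:ℝ) := by
        have := Int.floor_le (((x:ℝ) - p/2)/p)
        rw [le_div_iff₀ hp0] at this
        rw [hP]; linarith
      have hPx : (x:ℝ) - p < P := by
        have := Int.sub_one_lt_floor (((x:ℝ) - p/2)/p)
        have h' : (((x:ℝ) - p/2)/p - 1) * p < ((⌊((x:ℝ) - p/2)/p⌋ : ℝ)) * p :=
          mul_lt_mul_of_pos_right this hp0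
        rw [hP]
        have : (((x:ℝ) - p/2)/p - 1) * p = (x:ℝ) - p/2 - p := by field_simp
        linarith
      have hPmem : P ∈ Set.Icc (0:ℝ) 1 := ⟨by linarith, le_trans hxP x.2.2⟩
      set Py : UI := ⟨P, hPmem⟩ with hPy
      have hPcoe : (Py : ℝ) = P := rfl
      have hcond := h2 Py (by rw [hPcoe]; linarith) (by rw [hPcoe]; linarith)
      rw [hgx, hgx, hPcoe] at hcond
      have hsawP : saw p amp P = amp := by rw [hP]; exact saw_halfgrid hp0 hamp0 _
      rw [hsawP] at hcond
      have hfb := hfsmall Py x (by rw [hPcoe, abs_le]; constructor <;> linarith)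
      have haP : -a * (P - (x:ℝ)) ≤ a * p := by nlinarith
      have := abs_le.1 hfb
      rw [hc]
      linarith
    · -- NplusLow : right valley
      left
      set V := ((⌈(x:ℝ)/p⌉ : ℝ))*p with hV
      have hxV : (x:ℝ) ≤ V := by
        have := Int.le_ceil ((x:ℝ)/p)
        rw [div_le_iff₀ hp0] at this
        rw [hV]; linarith
      have hVx : V < (x:ℝ) + p := by
        have := Int.ceil_lt_add_one ((x:ℝ)/p)
        have h' : ((⌈(x:ℝ)/p⌉ : ℝ)) * p < ((x:ℝ)/p + 1) * p :=
          mul_lt_mul_of_pos_right this hp0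
        rw [hV]
        have : ((x:ℝ)/p + 1) * p = (x:ℝ) + p := by field_simp
        linarith
      have hVmem : V ∈ Set.Icc (0:ℝ) 1 := ⟨le_trans x.2.1 hxV, by linarith⟩
      set Vy : UI := ⟨V, hVmem⟩ with hVy
      have hVcoe : (Vy : ℝ) = V := rfl
      have hcond := h2 Vy (by rw [hVcoe]; linarith) (by rw [hVcoe]; linarith)
      rw [hgx, hgx, hVcoe] at hcond
      have hsawV : saw p amp V = 0 := by rw [hV]; exact saw_grid hp0 hamp0 _
      rw [hsawV] at hcond
      have hfb := hfsmall Vy x (by rw [hVcoe, abs_le]; constructor <;> linarith)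
      have haV : -(a*p) ≤ -a * (V - (x:ℝ)) := by nlinarith
      have := abs_le.1 hfb
      rw [hc]
      linarith
    · -- NminusUp : left valley
      left
      set V := ((⌊(x:ℝ)/p⌋ : ℝ))*p with hV
      have hxV : V ≤ (x:ℝ) := by
        have := Int.floor_le ((x:ℝ)/p)
        rw [le_div_iff₀ hp0] at this
        rw [hV]; linarith
      have hVx : (x:ℝ) - p < V := by
        have := Int.sub_one_lt_floor ((x:ℝ)/p)
        have h' : ((x:ℝ)/p - 1) * p < ((⌊(x:ℝ)/p⌋ : ℝ)) * p :=
          mul_lt_mul_of_pos_right this hp0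
        rw [hV]
        have : ((x:ℝ)/p - 1) * p = (x:ℝ) - p := by field_simp
        linarith
      have hVmem : V ∈ Set.Icc (0:ℝ) 1 := ⟨by linarith, le_trans hxV x.2.2⟩
      set Vy : UI := ⟨V, hVmem⟩ with hVy
      have hVcoe : (Vy : ℝ) = V := rfl
      have hcond := h2 Vy (by rw [hVcoe]; linarith) (by rw [hVcoe]; linarith)
      rw [hgx, hgx, hVcoe] at hcond
      have hsawV : saw p amp V = 0 := by rw [hV]; exact saw_grid hp0 hamp0 _
      rw [hsawV] at hcond
      have hfb := hfsmall Vy x (by rw [hVcoe, abs_le]; constructor <;> linarith)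
      have haV : -(a*p) ≤ a * (V - (x:ℝ)) := by nlinarith
      have := abs_le.1 hfb
      rw [hc]
      linarith
  -- the measure computation
  show volume (Subtype.val '' NN ⇑g a) < ε
  set t := c*p/(2*amp) with htdef
  have ht0 : 0 ≤ t := by positivity
  have hmono := measure_mono (μ := (volume : Measure ℝ)) (le_trans hkey (saw_bad_subset hp0 hamp0 hc0))
  have hIcc : ∀ j : ℤ, volume (Set.Icc ((j:ℝ)*p/2 - t) ((j:ℝ)*p/2 + t))
      = ENNReal.ofReal (2*t) := by
    intro j
    rw [Real.volume_Icc]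
    congr 1
    ring
  have hsum := measure_biUnion_finset_le (μ := volume) (Finset.Icc (0:ℤ) (⌊2/p⌋+2))
    (fun j => Set.Icc ((j:ℝ)*p/2 - t) ((j:ℝ)*p/2 + t))
  have hsum2 : ∑ j ∈ Finset.Icc (0:ℤ) (⌊2/p⌋+2),
      volume (Set.Icc ((j:ℝ)*p/2 - t) ((j:ℝ)*p/2 + t))
      = ((Finset.Icc (0:ℤ) (⌊2/p⌋+2)).card : ENNReal) * ENNReal.ofReal (2*t) := by
    rw [Finset.sum_congr rfl (fun j _ => hIcc j), Finset.sum_const, nsmul_eq_mul]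
  have hfloorp : (0:ℤ) ≤ ⌊2/p⌋ := Int.floor_nonneg.2 (by positivity)
  have hcard : ((Finset.Icc (0:ℤ) (⌊2/p⌋+2)).card : ℝ) ≤ 2/p + 3 := by
    rw [Int.card_Icc]
    have h1 : (⌊2/p⌋ + 2 + 1 - 0 : ℤ).toNat = (⌊2/p⌋ + 3 : ℤ).toNat := by congr 1; ring
    rw [h1]
    have h2 : (((⌊2/p⌋ + 3 : ℤ).toNat : ℤ) : ℝ) = ((⌊2/p⌋:ℝ) + 3) := by
      rw [Int.toNat_of_nonneg (by linarith)]
      push_cast; ring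
    rw [show (((⌊2/p⌋ + 3 : ℤ).toNat : ℝ)) = (((⌊2/p⌋ + 3 : ℤ).toNat : ℤ) : ℝ) by push_cast; ring,
      h2]
    have := Int.floor_le (2/p)
    linarith
  have hcard0 : (0:ℝ) ≤ ((Finset.Icc (0:ℤ) (⌊2/p⌋+2)).card : ℝ) := Nat.cast_nonneg _
  have hprod : ((Finset.Icc (0:ℤ) (⌊2/p⌋+2)).card : ENNReal) * ENNReal.ofReal (2*t)
      ≤ ENNReal.ofReal (ε'/2) := by
    rw [← ENNReal.ofReal_natCast, ← ENNReal.ofReal_mul hcard0]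
    apply ENNReal.ofReal_le_ofReal
    have h2t : 2*t = c*p/amp := by rw [htdef]; field_simp
    have hb1 : ((Finset.Icc (0:ℤ) (⌊2/p⌋+2)).card : ℝ) * (2*t) ≤ (2/p + 3) * (c*p/amp) := by
      rw [h2t]
      apply mul_le_mul hcard le_rfl (by positivity) (by positivity)
    have hb2 : (2/p + 3) * (c*p/amp) = (2*c + 3*(p*c))/amp := by field_simp
    have hb3 : (2*c + 3*(p*c))/amp ≤ 5*c/amp := by
      gcongr
      nlinarith
    have hb4 : 5*c/amp ≤ ε'/2 := by
      rw [div_le_iff₀ hamp0]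
      nlinarith
    linarith
  calc volume (Subtype.val '' NN ⇑g a)
      ≤ ∑ j ∈ Finset.Icc (0:ℤ) (⌊2/p⌋+2),
        volume (Set.Icc ((j:ℝ)*p/2 - t) ((j:ℝ)*p/2 + t)) := le_trans hmono hsum
    _ ≤ ENNReal.ofReal (ε'/2) := le_of_eq hsum2 |>.trans hprod
    _ ≤ ENNReal.ofReal ε' := ENNReal.ofReal_le_ofReal (by linarith)
    _ < ε := hε'lt

lemma exists_good_m (c r' s' : ℝ) (hr' : 0 < r') (hs' : 0 < s') :
    ∃ m : ℕ, |c| ≤ (m:ℝ) ∧ 2^(-(m:ℝ)) < r' ∧ 2^(-(m:ℝ)) ≤ s' := by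
  obtain ⟨n, hn⟩ := exists_nat_gt (max |c| (max (1/r') (1/s')))
  refine ⟨n, le_of_lt (lt_of_le_of_lt (le_max_left _ _) hn), ?_, ?_⟩
  · have h2n : (n:ℝ) < 2^(n:ℕ) := by exact_mod_cast Nat.lt_two_pow_self (n := n)
    have heq : (2:ℝ)^(-(n:ℝ)) = ((2:ℝ)^(n:ℕ))⁻¹ := by
      rw [← Real.rpow_natCast 2 n, ← Real.rpow_neg (by norm_num)]
    have h1 : 1/r' < 2^(n:ℕ) :=
      lt_trans (lt_of_le_of_lt (le_trans (le_max_left _ _) (le_max_right _ _)) hn) h2n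
    rw [heq]
    rw [one_div] at h1
    calc ((2:ℝ)^(n:ℕ))⁻¹ < (r'⁻¹)⁻¹ := by
          apply inv_strictAnti₀ (by positivity) h1
      _ = r' := inv_inv r'
  · have h2n : (n:ℝ) < 2^(n:ℕ) := by exact_mod_cast Nat.lt_two_pow_self (n := n)
    have heq : (2:ℝ)^(-(n:ℝ)) = ((2:ℝ)^(n:ℕ))⁻¹ := by
      rw [← Real.rpow_natCast 2 n, ← Real.rpow_neg (by norm_num)]
    have h1 : 1/s' < 2^(n:ℕ) :=
      lt_trans (lt_of_le_of_lt (le_trans (le_max_right _ _) (le_max_right _ _)) hn) h2n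
    rw [heq]
    rw [one_div] at h1
    calc ((2:ℝ)^(n:ℕ))⁻¹ ≤ (s'⁻¹)⁻¹ :=
          le_of_lt (inv_strictAnti₀ (by positivity) h1)
      _ = s' := inv_inv s'

section Bridge

variable {f : UI → ℝ} {x : UI}

lemma bridge_supR (hx1 : (x:ℝ) < 1) (hne : DiniSupR f x ≠ ⊤) :
    ∃ m : ℕ, x ∈ NplusUp f (m:ℝ) := by
  have hlt : DiniSupR f x < ⊤ := hne.lt_top
  obtain ⟨cR, hc1, _⟩ := EReal.lt_iff_exists_real_btwn.1 hlt
  rw [DiniSupR] at hc1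
  have hev := eventually_lt_of_limsup_lt hc1
  rw [eventually_nhdsWithin_iff, Metric.eventually_nhds_iff] at hev
  obtain ⟨rε, hrε, hball⟩ := hev
  obtain ⟨m, hm1, hm2, hm3⟩ := exists_good_m cR rε (1 - (x:ℝ)) hrε (by linarith)
  have habs := abs_le.1 hm1
  refine ⟨m, by linarith, fun y hy1 hy2 => ?_⟩
  rcases eq_or_lt_of_le hy1 with heq | hlt'
  · have : y = x := Subtype.ext heq.symm
    rw [this]
    simp
  · have hyIoi : y ∈ Set.Ioi x := by
      rw [Set.mem_Ioi, ← Subtype.coe_lt_coe]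
      exact hlt'
    have hdist : dist y x < rε := by
      rw [Subtype.dist_eq, Real.dist_eq, abs_of_pos (by linarith)]
      linarith
    have hs : ((f y - f x)/((y:ℝ)-(x:ℝ)) : ℝ) < cR :=
      EReal.coe_lt_coe_iff.1 (hball hdist hyIoi)
    rw [div_lt_iff₀ (by linarith : (0:ℝ) < (y:ℝ) - (x:ℝ))] at hs
    have : cR * ((y:ℝ) - (x:ℝ)) ≤ (m:ℝ) * ((y:ℝ) - (x:ℝ)) :=
      mul_le_mul_of_nonneg_right (by linarith) (by linarith)
    linarith

lemma bridge_infR (hx1 : (x:ℝ) < 1) (hne : DiniInfR f x ≠ ⊥) :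
    ∃ m : ℕ, x ∈ NplusLow f (m:ℝ) := by
  have hlt : ⊥ < DiniInfR f x := hne.bot_lt
  obtain ⟨cR, _, hc1⟩ := EReal.lt_iff_exists_real_btwn.1 hlt
  rw [DiniInfR] at hc1
  have hev := eventually_lt_of_lt_liminf hc1
  rw [eventually_nhdsWithin_iff, Metric.eventually_nhds_iff] at hev
  obtain ⟨rε, hrε, hball⟩ := hev
  obtain ⟨m, hm1, hm2, hm3⟩ := exists_good_m cR rε (1 - (x:ℝ)) hrε (by linarith)
  have habs := abs_le.1 hm1
  refine ⟨m, by linarith, fun y hy1 hy2 => ?_⟩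
  rcases eq_or_lt_of_le hy1 with heq | hlt'
  · have : y = x := Subtype.ext heq.symm
    rw [this]
    simp
  · have hyIoi : y ∈ Set.Ioi x := by
      rw [Set.mem_Ioi, ← Subtype.coe_lt_coe]
      exact hlt'
    have hdist : dist y x < rε := by
      rw [Subtype.dist_eq, Real.dist_eq, abs_of_pos (by linarith)]
      linarith
    have hs : cR < ((f y - f x)/((y:ℝ)-(x:ℝ)) : ℝ) :=
      EReal.coe_lt_coe_iff.1 (hball hdist hyIoi)
    rw [lt_div_iff₀ (by linarith : (0:ℝ) < (y:ℝ) - (x:ℝ))] at hs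
    have : -(m:ℝ) * ((y:ℝ) - (x:ℝ)) ≤ cR * ((y:ℝ) - (x:ℝ)) :=
      mul_le_mul_of_nonneg_right (by linarith) (by linarith)
    linarith

lemma bridge_supL (hx0 : 0 < (x:ℝ)) (hne : DiniSupL f x ≠ ⊤) :
    ∃ m : ℕ, x ∈ NminusUp f (m:ℝ) := by
  have hlt : DiniSupL f x < ⊤ := hne.lt_top
  obtain ⟨cR, hc1, _⟩ := EReal.lt_iff_exists_real_btwn.1 hlt
  rw [DiniSupL] at hc1
  have hev := eventually_lt_of_limsup_lt hc1
  rw [eventually_nhdsWithin_iff, Metric.eventually_nhds_iff] at hev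
  obtain ⟨rε, hrε, hball⟩ := hev
  obtain ⟨m, hm1, hm2, hm3⟩ := exists_good_m cR rε (x:ℝ) hrε hx0
  have habs := abs_le.1 hm1
  refine ⟨m, by linarith, fun y hy1 hy2 => ?_⟩
  rcases eq_or_lt_of_le hy2 with heq | hlt'
  · have : y = x := Subtype.ext heq
    rw [this]
    simp
  · have hyIio : y ∈ Set.Iio x := by
      rw [Set.mem_Iio, ← Subtype.coe_lt_coe]
      exact hlt'
    have hdist : dist y x < rε := by
      rw [Subtype.dist_eq, Real.dist_eq, abs_of_neg (by linarith), neg_sub]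
      linarith
    have hs : ((f y - f x)/((y:ℝ)-(x:ℝ)) : ℝ) < cR :=
      EReal.coe_lt_coe_iff.1 (hball hdist hyIio)
    rw [div_lt_iff_of_neg (by linarith : (y:ℝ) - (x:ℝ) < 0)] at hs
    -- hs : cR * (y - x) < f y - f x
    have : (m:ℝ) * ((y:ℝ) - (x:ℝ)) ≤ cR * ((y:ℝ) - (x:ℝ)) := by nlinarith
    linarith

lemma bridge_infL (hx0 : 0 < (x:ℝ)) (hne : DiniInfL f x ≠ ⊥) :
    ∃ m : ℕ, x ∈ NminusLow f (m:ℝ) := by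
  have hlt : ⊥ < DiniInfL f x := hne.bot_lt
  obtain ⟨cR, _, hc1⟩ := EReal.lt_iff_exists_real_btwn.1 hlt
  rw [DiniInfL] at hc1
  have hev := eventually_lt_of_lt_liminf hc1
  rw [eventually_nhdsWithin_iff, Metric.eventually_nhds_iff] at hev
  obtain ⟨rε, hrε, hball⟩ := hev
  obtain ⟨m, hm1, hm2, hm3⟩ := exists_good_m cR rε (x:ℝ) hrε hx0
  have habs := abs_le.1 hm1
  refine ⟨m, by linarith, fun y hy1 hy2 => ?_⟩
  rcases eq_or_lt_of_le hy2 with heq | hlt'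
  · have : y = x := Subtype.ext heq
    rw [this]
    simp
  · have hyIio : y ∈ Set.Iio x := by
      rw [Set.mem_Iio, ← Subtype.coe_lt_coe]
      exact hlt'
    have hdist : dist y x < rε := by
      rw [Subtype.dist_eq, Real.dist_eq, abs_of_neg (by linarith), neg_sub]
      linarith
    have hs : cR < ((f y - f x)/((y:ℝ)-(x:ℝ)) : ℝ) :=
      EReal.coe_lt_coe_iff.1 (hball hdist hyIio)
    rw [lt_div_iff_of_neg (by linarith : (y:ℝ) - (x:ℝ) < 0)] at hs
    -- hs : f y - f x < cR * (y - x)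
    have : cR * ((y:ℝ) - (x:ℝ)) ≤ -(m:ℝ) * ((y:ℝ) - (x:ℝ)) := by nlinarith
    linarith

end Bridge

/-- **Jarník's theorem.** A typical `f ∈ C(I)` satisfies `D⁺f(x) = D⁻f(x) = ∞` and
`D₊f(x) = D₋f(x) = −∞` for Lebesgue-almost every `x ∈ (0,1)`. -/
theorem jarnik_typical_knot_ae :
    {f : C(UI, ℝ) | ∀ᵐ x : ℝ ∂volume, ∀ hx : x ∈ Set.Ioo (0:ℝ) 1,
        DiniSupR ⇑f ⟨x, hx.1.le, hx.2.le⟩ = ⊤ ∧ DiniSupL ⇑f ⟨x, hx.1.le, hx.2.le⟩ = ⊤ ∧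
        DiniInfR ⇑f ⟨x, hx.1.le, hx.2.le⟩ = ⊥ ∧ DiniInfL ⇑f ⟨x, hx.1.le, hx.2.le⟩ = ⊥}
      ∈ residual C(UI, ℝ) := by
  set R : Set C(UI, ℝ) := ⋂ (m : ℕ) (k : ℕ), GSet (m:ℝ) (((k:ENNReal)+1))⁻¹ with hR
  have hRmem : R ∈ residual C(UI, ℝ) := by
    rw [hR]
    refine countable_iInter_mem.2 fun m => countable_iInter_mem.2 fun k => ?_
    refine residual_of_dense_open (isOpen_GSet _ _) (dense_GSet (Nat.cast_nonneg m) ?_)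
    simp [ENNReal.inv_pos]
  apply Filter.mem_of_superset hRmem
  intro f hf
  have hzero : ∀ m : ℕ, volume (Subtype.val '' NN ⇑f (m:ℝ)) = 0 := by
    intro m
    by_contra hne
    obtain ⟨k, hk⟩ := ENNReal.exists_inv_nat_lt hne
    have hmem : f ∈ GSet (m:ℝ) (((k:ENNReal)+1))⁻¹ :=
      Set.mem_iInter.1 (Set.mem_iInter.1 hf m) k
    have hle : (((k:ENNReal))+1)⁻¹ ≤ ((k:ENNReal))⁻¹ :=
      ENNReal.inv_le_inv.2 le_self_add
    exact absurd (lt_trans (lt_of_lt_of_le hmem hle) hk) (lt_irrefl _)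
  rw [Set.mem_setOf_eq, ae_iff]
  apply measure_mono_null ?_ (measure_iUnion_null hzero)
  intro x hx
  rw [Set.mem_setOf_eq] at hx
  rw [not_forall] at hx
  obtain ⟨hmem, hbad⟩ := hx
  set xS : UI := ⟨x, hmem.1.le, hmem.2.le⟩ with hxS
  have hx0 : 0 < (xS:ℝ) := hmem.1
  have hx1 : (xS:ℝ) < 1 := hmem.2
  have : (∃ m : ℕ, xS ∈ NN ⇑f (m:ℝ)) := by
    by_cases h1 : DiniSupR ⇑f xS = ⊤
    · by_cases h2 : DiniSupL ⇑f xS = ⊤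
      · by_cases h3 : DiniInfR ⇑f xS = ⊥
        · by_cases h4 : DiniInfL ⇑f xS = ⊥
          · exact absurd ⟨h1, h2, h3, h4⟩ hbad
          · obtain ⟨m, hm⟩ := bridge_infL hx0 h4
            exact ⟨m, Or.inl (Or.inr hm)⟩
        · obtain ⟨m, hm⟩ := bridge_infR hx1 h3
          exact ⟨m, Or.inr (Or.inl hm)⟩
      · obtain ⟨m, hm⟩ := bridge_supL hx0 h2
        exact ⟨m, Or.inr (Or.inr hm)⟩
    · obtain ⟨m, hm⟩ := bridge_supR hx1 h1
      exact ⟨m, Or.inl (Or.inl hm)⟩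
  obtain ⟨m, hm⟩ := this
  exact Set.mem_iUnion.2 ⟨m, ⟨xS, hm, rfl⟩⟩

end
end

section
/- Suppose 0 < a < b and ε > 0. Then there exists δ > 0 such that whenever f, g ∈ C(I) satisfy ‖f − g‖ < δ (supremum norm), one has N̂(f,a) ⊂ B(N̂(g,b), ε), Ň(f,a) ⊂ B(Ň(g,b), ε), and N(f,a) ⊂ B(N(g,b), ε). -/
open Filter Topology TopologicalSpace Set MeasureTheory

noncomputable section

lemma nbhd_mono' {A B : Set UI} (h : A ⊆ B) (r : ℝ) : nbhd A r ⊆ nbhd B r :=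
  Set.biUnion_subset_biUnion_left h

lemma nbhd_union' (A B : Set UI) (r : ℝ) :
    nbhd (A ∪ B) r = nbhd A r ∪ nbhd B r := Set.biUnion_union A B _

lemma mem_nbhd_of_dist {A : Set UI} {x x' : UI} {r : ℝ} (hx' : x' ∈ A)
    (hd : dist x x' < r) : x ∈ nbhd A r :=
  Set.mem_biUnion hx' (Metric.mem_ball.2 hd)

lemma Ncheck_eq_Nhat_neg (f : C(UI, ℝ)) (a : ℝ) : Ncheck ⇑f a = Nhat ⇑(-f) a := by
  unfold Ncheck Nhat NplusLow NplusUp NminusUp NminusLow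
  ext x
  simp only [ContinuousMap.neg_apply, Set.mem_union, Set.mem_setOf_eq]
  constructor <;> rintro (⟨h1, h2⟩ | ⟨h1, h2⟩)
  · exact Or.inl ⟨h1, fun y hy1 hy2 => by have := h2 y hy1 hy2; linarith⟩
  · exact Or.inr ⟨h1, fun y hy1 hy2 => by have := h2 y hy1 hy2; linarith⟩
  · exact Or.inl ⟨h1, fun y hy1 hy2 => by have := h2 y hy1 hy2; linarith⟩
  · exact Or.inr ⟨h1, fun y hy1 hy2 => by have := h2 y hy1 hy2; linarith⟩

lemma key_plusUp (a b ε η δ : ℝ) (ha : 0 < a) (hab : a < b) (hε : 0 < ε)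
    (hη : η = min (ε / 2) ((2:ℝ) ^ (-a) - (2:ℝ) ^ (-b)))
    (hδ : δ = (b - a) * η / 2)
    (f g : C(UI, ℝ)) (hfg : ∀ y : UI, |f y - g y| < δ) :
    NplusUp ⇑f a ⊆ nbhd (NplusUp ⇑g b) ε := by
  have hba : (2:ℝ) ^ (-b) < (2:ℝ) ^ (-a) :=
    (Real.rpow_lt_rpow_left_iff one_lt_two).mpr (by linarith)
  have hη1 : η ≤ ε / 2 := hη ▸ min_le_left _ _
  have hη2 : η ≤ (2:ℝ) ^ (-a) - (2:ℝ) ^ (-b) := hη ▸ min_le_right _ _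
  have hηpos : 0 < η := by rw [hη]; exact lt_min (by linarith) (by linarith)
  intro x hx
  obtain ⟨hx1, hx2⟩ := hx
  set S : Set UI := (fun y : UI => (y : ℝ)) ⁻¹' Set.Icc (x : ℝ) ((x : ℝ) + η) with hS
  have hScl : IsClosed S := isClosed_Icc.preimage continuous_subtype_val
  have hScomp : IsCompact S := hScl.isCompact
  have hSne : S.Nonempty := ⟨x, ⟨le_refl _, by linarith⟩⟩
  obtain ⟨x', hx'S, hmax⟩ := hScomp.exists_isMaxOn hSne
    ((g.continuous.sub (continuous_const.mul continuous_subtype_val)).continuousOn :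
      ContinuousOn (fun y : UI => g y - b * (y : ℝ)) S)
  obtain ⟨hxx' , hx'η⟩ := hx'S
  have hx'mem : x' ∈ NplusUp ⇑g b := by
    refine ⟨by linarith, fun y hy1 hy2 => ?_⟩
    by_cases hc : (y : ℝ) ≤ (x : ℝ) + η
    · have hyS : y ∈ S := ⟨by linarith, hc⟩
      have := hmax hyS
      simp only [Set.mem_setOf_eq, Pi.sub_apply, Pi.mul_apply] at this
      linarith
    · push_neg at hc
      have hfy : f y - f x ≤ a * ((y : ℝ) - (x : ℝ)) :=
        hx2 y (by linarith) (by linarith)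
      have hmaxx : g x - b * (x : ℝ) ≤ g x' - b * (x' : ℝ) :=
        hmax ⟨le_refl _, by linarith⟩
      have h1 := abs_lt.1 (hfg y)
      have h2 := abs_lt.1 (hfg x)
      have hmul : (b - a) * η ≤ (b - a) * ((y : ℝ) - (x : ℝ)) :=
        mul_le_mul_of_nonneg_left (by linarith) (by linarith)
      nlinarith [hmul, hfy, hmaxx, h1.1, h1.2, h2.1, h2.2]
  have hd : dist x x' < ε := by
    rw [Subtype.dist_eq, Real.dist_eq, abs_lt]
    constructor <;> linarith
  exact mem_nbhd_of_dist hx'mem hd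

lemma key_minusLow (a b ε η δ : ℝ) (ha : 0 < a) (hab : a < b) (hε : 0 < ε)
    (hη : η = min (ε / 2) ((2:ℝ) ^ (-a) - (2:ℝ) ^ (-b)))
    (hδ : δ = (b - a) * η / 2)
    (f g : C(UI, ℝ)) (hfg : ∀ y : UI, |f y - g y| < δ) :
    NminusLow ⇑f a ⊆ nbhd (NminusLow ⇑g b) ε := by
  have hba : (2:ℝ) ^ (-b) < (2:ℝ) ^ (-a) :=
    (Real.rpow_lt_rpow_left_iff one_lt_two).mpr (by linarith)
  have hη1 : η ≤ ε / 2 := hη ▸ min_le_left _ _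
  have hη2 : η ≤ (2:ℝ) ^ (-a) - (2:ℝ) ^ (-b) := hη ▸ min_le_right _ _
  have hηpos : 0 < η := by rw [hη]; exact lt_min (by linarith) (by linarith)
  intro x hx
  obtain ⟨hx1, hx2⟩ := hx
  set S : Set UI := (fun y : UI => (y : ℝ)) ⁻¹' Set.Icc ((x : ℝ) - η) (x : ℝ) with hS
  have hScl : IsClosed S := isClosed_Icc.preimage continuous_subtype_val
  have hScomp : IsCompact S := hScl.isCompact
  have hSne : S.Nonempty := ⟨x, ⟨by linarith, le_refl _⟩⟩
  obtain ⟨x', hx'S, hmax⟩ := hScomp.exists_isMaxOn hSne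
    ((g.continuous.add (continuous_const.mul continuous_subtype_val)).continuousOn :
      ContinuousOn (fun y : UI => g y + b * (y : ℝ)) S)
  obtain ⟨hx'η, hxx'⟩ := hx'S
  have hx'mem : x' ∈ NminusLow ⇑g b := by
    refine ⟨by linarith, fun y hy1 hy2 => ?_⟩
    by_cases hc : (x : ℝ) - η ≤ (y : ℝ)
    · have hyS : y ∈ S := ⟨hc, by linarith⟩
      have := hmax hyS
      simp only [Set.mem_setOf_eq, Pi.add_apply, Pi.mul_apply] at this
      linarith
    · push_neg at hc
      have hfy : f y - f x ≤ -a * ((y : ℝ) - (x : ℝ)) :=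
        hx2 y (by linarith) (by linarith)
      have hmaxx : g x + b * (x : ℝ) ≤ g x' + b * (x' : ℝ) :=
        hmax ⟨by linarith, le_refl _⟩
      have h1 := abs_lt.1 (hfg y)
      have h2 := abs_lt.1 (hfg x)
      have hmul : (b - a) * η ≤ (b - a) * ((x : ℝ) - (y : ℝ)) :=
        mul_le_mul_of_nonneg_left (by linarith) (by linarith)
      nlinarith [hmul, hfy, hmaxx, h1.1, h1.2, h2.1, h2.2]
  have hd : dist x x' < ε := by
    rw [Subtype.dist_eq, Real.dist_eq, abs_lt]
    constructor <;> linarith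
  exact mem_nbhd_of_dist hx'mem hd

/-- Continuity of `N(·,·)`: for `0 < a < b` and `ε > 0` there is `δ > 0` such that
`‖f − g‖ < δ` implies `N̂(f,a) ⊆ B(N̂(g,b),ε)`, `Ň(f,a) ⊆ B(Ň(g,b),ε)` and
`N(f,a) ⊆ B(N(g,b),ε)`. -/
theorem nbhd_N_continuity (a b ε : ℝ) (ha : 0 < a) (hab : a < b) (hε : 0 < ε) :
    ∃ δ > 0, ∀ f g : C(UI, ℝ), ‖f - g‖ < δ →
      Nhat ⇑f a ⊆ nbhd (Nhat ⇑g b) ε ∧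
      Ncheck ⇑f a ⊆ nbhd (Ncheck ⇑g b) ε ∧
      NN ⇑f a ⊆ nbhd (NN ⇑g b) ε := by
  set η : ℝ := min (ε / 2) ((2:ℝ) ^ (-a) - (2:ℝ) ^ (-b)) with hη
  set δ : ℝ := (b - a) * η / 2 with hδ
  have hba : (2:ℝ) ^ (-b) < (2:ℝ) ^ (-a) :=
    (Real.rpow_lt_rpow_left_iff one_lt_two).mpr (by linarith)
  have hηpos : 0 < η := lt_min (by linarith) (by linarith)
  have hδpos : 0 < δ := by
    have : 0 < b - a := by linarith
    positivity
  refine ⟨δ, hδpos, fun f g hfg => ?_⟩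
  have hpt : ∀ f g : C(UI, ℝ), ‖f - g‖ < δ → ∀ y : UI, |f y - g y| < δ := by
    intro f g h y
    calc |f y - g y| = ‖(f - g) y‖ := by
          simp [ContinuousMap.sub_apply, Real.norm_eq_abs]
      _ ≤ ‖f - g‖ := ContinuousMap.norm_coe_le_norm (f - g) y
      _ < δ := h
  have hhat : ∀ f g : C(UI, ℝ), (∀ y : UI, |f y - g y| < δ) →
      Nhat ⇑f a ⊆ nbhd (Nhat ⇑g b) ε := by
    intro f g h x hx
    rcases hx with hx | hx
    · exact nbhd_mono' Set.subset_union_left ε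
        (key_plusUp a b ε η δ ha hab hε hη hδ f g h hx)
    · exact nbhd_mono' Set.subset_union_right ε
        (key_minusLow a b ε η δ ha hab hε hη hδ f g h hx)
  have h1 : Nhat ⇑f a ⊆ nbhd (Nhat ⇑g b) ε := hhat f g (hpt f g hfg)
  have hfg' : ‖(-f) - (-g)‖ < δ := by
    have : (-f) - (-g) = -(f - g) := by ring
    rw [this, norm_neg]; exact hfg
  have h2 : Ncheck ⇑f a ⊆ nbhd (Ncheck ⇑g b) ε := by
    rw [Ncheck_eq_Nhat_neg f a, Ncheck_eq_Nhat_neg g b]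
    exact hhat (-f) (-g) (hpt (-f) (-g) hfg')
  refine ⟨h1, h2, ?_⟩
  intro x hx
  rcases hx with hx | hx
  · exact nbhd_mono' (Set.subset_union_left : Nhat ⇑g b ⊆ NN ⇑g b) ε (h1 hx)
  · exact nbhd_mono' (Set.subset_union_right : Ncheck ⇑g b ⊆ NN ⇑g b) ε (h2 hx)

end
end

section
/- If f is a continuously differentiable function on I and 0 < a < b, then N̂(f,a) is contained in the interior (relative to I) of N̂(f,b), and Ň(f,a) is contained in the interior of Ň(f,b). -/
open Filter Topology TopologicalSpace Set MeasureTheory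

noncomputable section

namespace NProofAux

lemma hasDerivAt_interior {F : ℝ → ℝ} (hF : ContDiffOn ℝ 1 F (Set.Icc 0 1))
    {z : ℝ} (hz : z ∈ Set.Ioo (0:ℝ) 1) :
    HasDerivAt F (derivWithin F (Set.Icc (0:ℝ) 1) z) z := by
  have hd : DifferentiableWithinAt ℝ F (Set.Icc (0:ℝ) 1) z :=
    (hF.differentiableOn one_ne_zero) z (Set.Ioo_subset_Icc_self hz)
  exact hd.hasDerivWithinAt.hasDerivAt (Icc_mem_nhds hz.1 hz.2)

lemma mvt_upper {F : ℝ → ℝ} (hF : ContDiffOn ℝ 1 F (Set.Icc 0 1))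
    {u v c : ℝ} (hu : u ∈ Set.Icc (0:ℝ) 1) (hv : v ∈ Set.Icc (0:ℝ) 1) (huv : u ≤ v)
    (hc : ∀ z ∈ Set.Icc u v, derivWithin F (Set.Icc (0:ℝ) 1) z ≤ c) :
    F v - F u ≤ c * (v - u) := by
  have hIcc : Set.Icc u v ⊆ Set.Icc (0:ℝ) 1 := Set.Icc_subset_Icc hu.1 hv.2
  have hint : interior (Set.Icc u v) ⊆ Set.Ioo (0:ℝ) 1 := by
    rw [interior_Icc]
    exact fun z hz => ⟨lt_of_le_of_lt hu.1 hz.1, lt_of_lt_of_le hz.2 hv.2⟩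
  have hcont : ContinuousOn F (Set.Icc u v) := hF.continuousOn.mono hIcc
  have hdiff : DifferentiableOn ℝ F (interior (Set.Icc u v)) := fun z hz =>
    ((hasDerivAt_interior hF (hint hz)).differentiableAt).differentiableWithinAt
  refine (convex_Icc u v).image_sub_le_mul_sub_of_deriv_le hcont hdiff ?_ u ⟨le_rfl, huv⟩
    v ⟨huv, le_rfl⟩ huv
  intro z hz
  rw [(hasDerivAt_interior hF (hint hz)).deriv]
  exact hc z (by rw [interior_Icc] at hz; exact Set.Ioo_subset_Icc_self hz)

lemma mvt_lower {F : ℝ → ℝ} (hF : ContDiffOn ℝ 1 F (Set.Icc 0 1))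
    {u v c : ℝ} (hu : u ∈ Set.Icc (0:ℝ) 1) (hv : v ∈ Set.Icc (0:ℝ) 1) (huv : u ≤ v)
    (hc : ∀ z ∈ Set.Icc u v, c ≤ derivWithin F (Set.Icc (0:ℝ) 1) z) :
    c * (v - u) ≤ F v - F u := by
  have hIcc : Set.Icc u v ⊆ Set.Icc (0:ℝ) 1 := Set.Icc_subset_Icc hu.1 hv.2
  have hint : interior (Set.Icc u v) ⊆ Set.Ioo (0:ℝ) 1 := by
    rw [interior_Icc]
    exact fun z hz => ⟨lt_of_le_of_lt hu.1 hz.1, lt_of_lt_of_le hz.2 hv.2⟩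
  have hcont : ContinuousOn F (Set.Icc u v) := hF.continuousOn.mono hIcc
  have hdiff : DifferentiableOn ℝ F (interior (Set.Icc u v)) := fun z hz =>
    ((hasDerivAt_interior hF (hint hz)).differentiableAt).differentiableWithinAt
  refine (convex_Icc u v).mul_sub_le_image_sub_of_le_deriv hcont hdiff ?_ u ⟨le_rfl, huv⟩
    v ⟨huv, le_rfl⟩ huv
  intro z hz
  rw [(hasDerivAt_interior hF (hint hz)).deriv]
  exact hc z (by rw [interior_Icc] at hz; exact Set.Ioo_subset_Icc_self hz)

lemma exists_deriv_bound {F : ℝ → ℝ} (hF : ContDiffOn ℝ 1 F (Set.Icc 0 1)) :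
    ∃ M : ℝ, 0 ≤ M ∧ ∀ z ∈ Set.Icc (0:ℝ) 1, |derivWithin F (Set.Icc (0:ℝ) 1) z| ≤ M := by
  have hg : ContinuousOn (derivWithin F (Set.Icc (0:ℝ) 1)) (Set.Icc 0 1) :=
    hF.continuousOn_derivWithin (uniqueDiffOn_Icc one_pos) le_rfl
  obtain ⟨M, hM⟩ := isCompact_Icc.exists_bound_of_continuousOn hg
  exact ⟨max M 0, le_max_right _ _, fun z hz =>
    le_trans (by simpa using hM z hz) (le_max_left _ _)⟩

lemma abs_image_sub_le {F : ℝ → ℝ} (hF : ContDiffOn ℝ 1 F (Set.Icc 0 1)) {M : ℝ}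
    (hM : ∀ z ∈ Set.Icc (0:ℝ) 1, |derivWithin F (Set.Icc (0:ℝ) 1) z| ≤ M)
    {u v : ℝ} (hu : u ∈ Set.Icc (0:ℝ) 1) (hv : v ∈ Set.Icc (0:ℝ) 1) :
    |F v - F u| ≤ M * |v - u| := by
  have key : ∀ p q : ℝ, p ∈ Set.Icc (0:ℝ) 1 → q ∈ Set.Icc (0:ℝ) 1 → p ≤ q →
      |F q - F p| ≤ M * |q - p| := by
    intro p q hp hq hpq
    have hsub : Set.Icc p q ⊆ Set.Icc (0:ℝ) 1 := Set.Icc_subset_Icc hp.1 hq.2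
    have h1 := mvt_upper hF hp hq hpq (fun z hz => (abs_le.1 (hM z (hsub hz))).2)
    have h2 := mvt_lower hF hp hq hpq (c := -M) (fun z hz => (abs_le.1 (hM z (hsub hz))).1)
    rw [show |q - p| = q - p from abs_of_nonneg (by linarith), abs_le]
    constructor <;> linarith
  rcases le_total u v with h | h
  · exact key u v hu hv h
  · have := key v u hv hu h
    rwa [abs_sub_comm (F u) (F v), abs_sub_comm u v] at this

lemma deriv_le_of_slope_right {F : ℝ → ℝ} (hF : ContDiffOn ℝ 1 F (Set.Icc 0 1))
    {x l a : ℝ} (hx : x ∈ Set.Icc (0:ℝ) 1) (hx1 : x < 1) (hl : 0 < l)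
    (h : ∀ y, x < y → y ≤ x + l → y ≤ 1 → F y - F x ≤ a * (y - x)) :
    derivWithin F (Set.Icc (0:ℝ) 1) x ≤ a := by
  set m := min 1 (x + l) with hm
  have hxm : x < m := lt_min hx1 (by linarith)
  have hsub : Set.Ioc x m ⊆ Set.Icc (0:ℝ) 1 := fun y hy =>
    ⟨le_of_lt (lt_of_le_of_lt hx.1 hy.1), le_trans hy.2 (min_le_left _ _)⟩
  have hder : HasDerivWithinAt F (derivWithin F (Set.Icc (0:ℝ) 1) x) (Set.Ioc x m) x :=
    (((hF.differentiableOn one_ne_zero) x hx).hasDerivWithinAt).mono hsub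
  have htend := hasDerivWithinAt_iff_tendsto_slope.1 hder
  have hne : (Set.Ioc x m) \ {x} = Set.Ioc x m := by
    apply Set.diff_singleton_eq_self; simp
  rw [hne, nhdsWithin_Ioc_eq_nhdsGT hxm] at htend
  refine le_of_tendsto htend ?_
  filter_upwards [Ioc_mem_nhdsGT hxm] with y hy
  rw [slope_def_field]
  rw [div_le_iff₀ (by linarith [hy.1] : (0:ℝ) < y - x)]
  calc F y - F x ≤ a * (y - x) :=
        h y hy.1 (le_trans hy.2 (min_le_right _ _)) (le_trans hy.2 (min_le_left _ _))
    _ = a * (y - x) := rfl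

lemma deriv_ge_of_slope_left {F : ℝ → ℝ} (hF : ContDiffOn ℝ 1 F (Set.Icc 0 1))
    {x l c : ℝ} (hx : x ∈ Set.Icc (0:ℝ) 1) (hx0 : 0 < x) (hl : 0 < l)
    (h : ∀ y, x - l ≤ y → y < x → 0 ≤ y → F y - F x ≤ c * (y - x)) :
    c ≤ derivWithin F (Set.Icc (0:ℝ) 1) x := by
  set m := max 0 (x - l) with hm
  have hxm : m < x := max_lt hx0 (by linarith)
  have hsub : Set.Ico m x ⊆ Set.Icc (0:ℝ) 1 := fun y hy =>
    ⟨le_trans (le_max_left _ _) hy.1, le_of_lt (lt_of_lt_of_le hy.2 hx.2)⟩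
  have hder : HasDerivWithinAt F (derivWithin F (Set.Icc (0:ℝ) 1) x) (Set.Ico m x) x :=
    (((hF.differentiableOn one_ne_zero) x hx).hasDerivWithinAt).mono hsub
  have htend := hasDerivWithinAt_iff_tendsto_slope.1 hder
  have hne : (Set.Ico m x) \ {x} = Set.Ico m x := by
    apply Set.diff_singleton_eq_self; simp
  rw [hne, nhdsWithin_Ico_eq_nhdsLT hxm] at htend
  refine ge_of_tendsto htend ?_
  filter_upwards [Ico_mem_nhdsLT hxm] with y hy
  rw [slope_def_field]
  rw [le_div_iff_of_neg (by linarith [hy.2] : y - x < 0)]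
  have := h y (le_trans (le_max_right _ _) hy.1) hy.2 (le_trans (le_max_left _ _) hy.1)
  linarith [this]

lemma core_right {F : ℝ → ℝ} (hF : ContDiffOn ℝ 1 F (Set.Icc 0 1)) {a b : ℝ}
    (ha : 0 < a) (hab : a < b) {x : ℝ} (hxI : x ∈ Set.Icc (0:ℝ) 1)
    (hx1 : x ≤ 1 - 2 ^ (-a))
    (hx2 : ∀ y ∈ Set.Icc (0:ℝ) 1, x ≤ y → y ≤ x + 2 ^ (-a) → F y - F x ≤ a * (y - x)) :
    ∃ ε > 0, ∀ x' ∈ Set.Icc (0:ℝ) 1, |x' - x| < ε →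
      x' ≤ 1 - 2 ^ (-b) ∧
      ∀ y ∈ Set.Icc (0:ℝ) 1, x' ≤ y → y ≤ x' + 2 ^ (-b) → F y - F x' ≤ b * (y - x') := by
  have hta0 : (0:ℝ) < 2 ^ (-a) := Real.rpow_pos_of_pos two_pos _
  have htb0 : (0:ℝ) < 2 ^ (-b) := Real.rpow_pos_of_pos two_pos _
  have htba : (2:ℝ) ^ (-b) < 2 ^ (-a) :=
    (Real.rpow_lt_rpow_left_iff one_lt_two).mpr (by linarith)
  have hx1' : x < 1 := by linarith
  obtain ⟨M, hM0, hM⟩ := exists_deriv_bound hF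
  have hgx : derivWithin F (Set.Icc (0:ℝ) 1) x ≤ a := by
    apply deriv_le_of_slope_right hF hxI hx1' hta0
    intro y hy1 hy2 hy3
    exact hx2 y ⟨le_trans hxI.1 (le_of_lt hy1), hy3⟩ (le_of_lt hy1) hy2
  set c : ℝ := (a + b) / 2 with hc
  have hcb : c < b := by rw [hc]; linarith
  have hac : a < c := by rw [hc]; linarith
  have hgcont : ContinuousOn (derivWithin F (Set.Icc (0:ℝ) 1)) (Set.Icc (0:ℝ) 1) :=
    hF.continuousOn_derivWithin (uniqueDiffOn_Icc one_pos) le_rfl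
  have hp : ∀ᶠ t in 𝓝 (derivWithin F (Set.Icc (0:ℝ) 1) x), t < c :=
    Iio_mem_nhds (lt_of_le_of_lt hgx hac)
  have hev : ∀ᶠ z in 𝓝[Set.Icc (0:ℝ) 1] x, derivWithin F (Set.Icc (0:ℝ) 1) z < c :=
    (hgcont x hxI).eventually hp
  rw [Filter.eventually_iff, Metric.mem_nhdsWithin_iff] at hev
  obtain ⟨η, hη0, hη⟩ := hev
  set θ : ℝ := η / 3 with hθ
  have hθ0 : 0 < θ := by rw [hθ]; linarith
  set d : ℝ := 2 ^ (-a) - 2 ^ (-b) with hd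
  have hd0 : 0 < d := by rw [hd]; linarith
  set ε : ℝ := min (min (d / 2) (θ / 2)) ((b - a) * θ / (a + M + 1)) with hε
  have hε0 : 0 < ε := by
    apply lt_min (lt_min (by linarith) (by linarith))
    exact div_pos (mul_pos (by linarith) hθ0) (by linarith)
  have hε1 : ε ≤ d / 2 := le_trans (min_le_left _ _) (min_le_left _ _)
  have hε2 : ε ≤ θ / 2 := le_trans (min_le_left _ _) (min_le_right _ _)
  have hε3 : (a + M + 1) * ε ≤ (b - a) * θ := by
    have h := min_le_right (min (d / 2) (θ / 2)) ((b - a) * θ / (a + M + 1))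
    rw [← hε] at h
    calc (a + M + 1) * ε ≤ (a + M + 1) * ((b - a) * θ / (a + M + 1)) :=
          mul_le_mul_of_nonneg_left h (by linarith)
      _ = (b - a) * θ := by field_simp
  refine ⟨ε, hε0, fun x' hx'I hdist => ?_⟩
  rw [abs_lt] at hdist
  constructor
  · rw [hd] at hε1; linarith [hdist.2]
  intro y hyI hy1 hy2
  by_cases hcase : y ≤ x' + θ
  · have hcbound : ∀ z ∈ Set.Icc x' y, derivWithin F (Set.Icc (0:ℝ) 1) z ≤ c := by
      intro z hz
      have hzI : z ∈ Set.Icc (0:ℝ) 1 := ⟨le_trans hx'I.1 hz.1, le_trans hz.2 hyI.2⟩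
      have hzb : z ∈ Metric.ball x η := by
        rw [Metric.mem_ball, Real.dist_eq, abs_lt]
        rw [hθ] at hθ0 hε2 hcase
        constructor
        · linarith [hz.1, hdist.1]
        · linarith [hz.2, hdist.2]
      exact le_of_lt (hη ⟨hzb, hzI⟩)
    have hmvt := mvt_upper hF hx'I hyI hy1 hcbound
    have hlast := mul_le_mul_of_nonneg_right (le_of_lt hcb) (sub_nonneg.2 hy1)
    linarith
  · push_neg at hcase
    have hxy : x < y := by linarith
    have hyr : y ≤ x + 2 ^ (-a) := by rw [hd] at hε1; linarith
    have h1 := hx2 y hyI (le_of_lt hxy) hyr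
    have h2 : |F x - F x'| ≤ M * |x - x'| := abs_image_sub_le hF hM hx'I hxI
    have h2' : F x - F x' ≤ M * ε := by
      have habs : |x - x'| ≤ ε := by rw [abs_le]; constructor <;> linarith
      have := mul_le_mul_of_nonneg_left habs hM0
      linarith [(abs_le.1 h2).2]
    have h7 : a * (x' - x) ≤ a * ε := mul_le_mul_of_nonneg_left (by linarith) (le_of_lt ha)
    have h6 : (b - a) * θ ≤ (b - a) * (y - x') :=
      mul_le_mul_of_nonneg_left (by linarith : θ ≤ y - x') (by linarith)
    nlinarith [h1, h2', h7, h6, hε3, hε0]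

lemma core_left {F : ℝ → ℝ} (hF : ContDiffOn ℝ 1 F (Set.Icc 0 1)) {a b : ℝ}
    (ha : 0 < a) (hab : a < b) {x : ℝ} (hxI : x ∈ Set.Icc (0:ℝ) 1)
    (hx1 : 2 ^ (-a) ≤ x)
    (hx2 : ∀ y ∈ Set.Icc (0:ℝ) 1, x - 2 ^ (-a) ≤ y → y ≤ x → F y - F x ≤ -a * (y - x)) :
    ∃ ε > 0, ∀ x' ∈ Set.Icc (0:ℝ) 1, |x' - x| < ε →
      2 ^ (-b) ≤ x' ∧
      ∀ y ∈ Set.Icc (0:ℝ) 1, x' - 2 ^ (-b) ≤ y → y ≤ x' → F y - F x' ≤ -b * (y - x') := by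
  have hta0 : (0:ℝ) < 2 ^ (-a) := Real.rpow_pos_of_pos two_pos _
  have htb0 : (0:ℝ) < 2 ^ (-b) := Real.rpow_pos_of_pos two_pos _
  have htba : (2:ℝ) ^ (-b) < 2 ^ (-a) :=
    (Real.rpow_lt_rpow_left_iff one_lt_two).mpr (by linarith)
  have hx0 : 0 < x := by linarith
  obtain ⟨M, hM0, hM⟩ := exists_deriv_bound hF
  have hgx : -a ≤ derivWithin F (Set.Icc (0:ℝ) 1) x := by
    apply deriv_ge_of_slope_left hF hxI hx0 hta0
    intro y hy1 hy2 hy3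
    exact hx2 y ⟨hy3, le_trans (le_of_lt hy2) hxI.2⟩ hy1 (le_of_lt hy2)
  set c : ℝ := (a + b) / 2 with hc
  have hcb : c < b := by rw [hc]; linarith
  have hac : a < c := by rw [hc]; linarith
  have hgcont : ContinuousOn (derivWithin F (Set.Icc (0:ℝ) 1)) (Set.Icc (0:ℝ) 1) :=
    hF.continuousOn_derivWithin (uniqueDiffOn_Icc one_pos) le_rfl
  have hp : ∀ᶠ t in 𝓝 (derivWithin F (Set.Icc (0:ℝ) 1) x), -c < t :=
    Ioi_mem_nhds (lt_of_lt_of_le (by linarith) hgx)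
  have hev : ∀ᶠ z in 𝓝[Set.Icc (0:ℝ) 1] x, -c < derivWithin F (Set.Icc (0:ℝ) 1) z :=
    (hgcont x hxI).eventually hp
  rw [Filter.eventually_iff, Metric.mem_nhdsWithin_iff] at hev
  obtain ⟨η, hη0, hη⟩ := hev
  set θ : ℝ := η / 3 with hθ
  have hθ0 : 0 < θ := by rw [hθ]; linarith
  set d : ℝ := 2 ^ (-a) - 2 ^ (-b) with hd
  have hd0 : 0 < d := by rw [hd]; linarith
  set ε : ℝ := min (min (d / 2) (θ / 2)) ((b - a) * θ / (a + M + 1)) with hε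
  have hε0 : 0 < ε := by
    apply lt_min (lt_min (by linarith) (by linarith))
    exact div_pos (mul_pos (by linarith) hθ0) (by linarith)
  have hε1 : ε ≤ d / 2 := le_trans (min_le_left _ _) (min_le_left _ _)
  have hε2 : ε ≤ θ / 2 := le_trans (min_le_left _ _) (min_le_right _ _)
  have hε3 : (a + M + 1) * ε ≤ (b - a) * θ := by
    have h := min_le_right (min (d / 2) (θ / 2)) ((b - a) * θ / (a + M + 1))
    rw [← hε] at h
    calc (a + M + 1) * ε ≤ (a + M + 1) * ((b - a) * θ / (a + M + 1)) :=
          mul_le_mul_of_nonneg_left h (by linarith)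
      _ = (b - a) * θ := by field_simp
  refine ⟨ε, hε0, fun x' hx'I hdist => ?_⟩
  rw [abs_lt] at hdist
  constructor
  · rw [hd] at hε1; linarith [hdist.1]
  intro y hyI hy1 hy2
  by_cases hcase : x' - θ ≤ y
  · have hcbound : ∀ z ∈ Set.Icc y x', -c ≤ derivWithin F (Set.Icc (0:ℝ) 1) z := by
      intro z hz
      have hzI : z ∈ Set.Icc (0:ℝ) 1 := ⟨le_trans hyI.1 hz.1, le_trans hz.2 hx'I.2⟩
      have hzb : z ∈ Metric.ball x η := by
        rw [Metric.mem_ball, Real.dist_eq, abs_lt]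
        rw [hθ] at hθ0 hε2 hcase
        constructor
        · linarith [hz.1, hdist.1]
        · linarith [hz.2, hdist.2]
      exact le_of_lt (hη ⟨hzb, hzI⟩)
    have hmvt := mvt_lower hF hyI hx'I hy2 hcbound
    have hlast := mul_le_mul_of_nonneg_right (le_of_lt hcb) (sub_nonneg.2 hy2)
    nlinarith [hmvt, hlast]
  · push_neg at hcase
    have hxy : y < x := by linarith
    have hyl : x - 2 ^ (-a) ≤ y := by rw [hd] at hε1; linarith
    have h1 := hx2 y hyI hyl (le_of_lt hxy)
    have h2 : |F x - F x'| ≤ M * |x - x'| := abs_image_sub_le hF hM hx'I hxI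
    have h2' : F x - F x' ≤ M * ε := by
      have habs : |x - x'| ≤ ε := by rw [abs_le]; constructor <;> linarith
      have := mul_le_mul_of_nonneg_left habs hM0
      linarith [(abs_le.1 h2).2]
    have h7 : a * (x - x') ≤ a * ε := mul_le_mul_of_nonneg_left (by linarith) (le_of_lt ha)
    have h6 : (b - a) * θ ≤ (b - a) * (x' - y) :=
      mul_le_mul_of_nonneg_left (by linarith) (by linarith)
    nlinarith [h1, h2', h7, h6, hε3, hε0]


lemma nplusUp_subset_interior {f : UI → ℝ} (hf : IsC1 f) {a b : ℝ} (ha : 0 < a)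
    (hab : a < b) : NplusUp f a ⊆ interior (NplusUp f b) := by
  intro x hx
  obtain ⟨hx1, hx2⟩ := hx
  have hF : ContDiffOn ℝ 1 (Set.IccExtend (zero_le_one : (0:ℝ) ≤ 1) f) (Set.Icc 0 1) := hf
  have hslope : ∀ y ∈ Set.Icc (0:ℝ) 1, (x:ℝ) ≤ y → y ≤ (x:ℝ) + 2 ^ (-a) →
      Set.IccExtend (zero_le_one : (0:ℝ) ≤ 1) f y -
        Set.IccExtend (zero_le_one : (0:ℝ) ≤ 1) f ↑x ≤ a * (y - (x:ℝ)) := by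
    intro y hy h1 h2
    rw [Set.IccExtend_of_mem _ f hy, Set.IccExtend_val _ f x]
    exact hx2 ⟨y, hy⟩ h1 h2
  obtain ⟨ε, hε0, hball⟩ := core_right hF ha hab x.2 hx1 hslope
  rw [mem_interior_iff_mem_nhds, Metric.mem_nhds_iff]
  refine ⟨ε, hε0, fun x' hx' => ?_⟩
  have hd : |(x' : ℝ) - (x : ℝ)| < ε := by
    have := Metric.mem_ball.1 hx'
    rwa [Subtype.dist_eq, Real.dist_eq] at this
  obtain ⟨h1, h2⟩ := hball ↑x' x'.2 hd
  refine ⟨h1, fun y hy1 hy2 => ?_⟩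
  have h3 := h2 ↑y y.2 hy1 hy2
  rwa [Set.IccExtend_val _ f y, Set.IccExtend_val _ f x'] at h3

lemma nminusLow_subset_interior {f : UI → ℝ} (hf : IsC1 f) {a b : ℝ} (ha : 0 < a)
    (hab : a < b) : NminusLow f a ⊆ interior (NminusLow f b) := by
  intro x hx
  obtain ⟨hx1, hx2⟩ := hx
  have hF : ContDiffOn ℝ 1 (Set.IccExtend (zero_le_one : (0:ℝ) ≤ 1) f) (Set.Icc 0 1) := hf
  have hslope : ∀ y ∈ Set.Icc (0:ℝ) 1, (x:ℝ) - 2 ^ (-a) ≤ y → y ≤ (x:ℝ) →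
      Set.IccExtend (zero_le_one : (0:ℝ) ≤ 1) f y -
        Set.IccExtend (zero_le_one : (0:ℝ) ≤ 1) f ↑x ≤ -a * (y - (x:ℝ)) := by
    intro y hy h1 h2
    rw [Set.IccExtend_of_mem _ f hy, Set.IccExtend_val _ f x]
    exact hx2 ⟨y, hy⟩ h1 h2
  obtain ⟨ε, hε0, hball⟩ := core_left hF ha hab x.2 hx1 hslope
  rw [mem_interior_iff_mem_nhds, Metric.mem_nhds_iff]
  refine ⟨ε, hε0, fun x' hx' => ?_⟩
  have hd : |(x' : ℝ) - (x : ℝ)| < ε := by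
    have := Metric.mem_ball.1 hx'
    rwa [Subtype.dist_eq, Real.dist_eq] at this
  obtain ⟨h1, h2⟩ := hball ↑x' x'.2 hd
  refine ⟨h1, fun y hy1 hy2 => ?_⟩
  have h3 := h2 ↑y y.2 hy1 hy2
  rwa [Set.IccExtend_val _ f y, Set.IccExtend_val _ f x'] at h3

lemma nhat_subset_interior {f : UI → ℝ} (hf : IsC1 f) {a b : ℝ} (ha : 0 < a)
    (hab : a < b) : Nhat f a ⊆ interior (Nhat f b) := by
  rintro x (hx | hx)
  · exact interior_mono Set.subset_union_left (nplusUp_subset_interior hf ha hab hx)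
  · exact interior_mono Set.subset_union_right (nminusLow_subset_interior hf ha hab hx)

lemma isC1_neg {f : UI → ℝ} (hf : IsC1 f) : IsC1 (fun y => -f y) := by
  have heq : Set.IccExtend (zero_le_one : (0:ℝ) ≤ 1) (fun y : UI => -f y)
      = fun t => -(Set.IccExtend (zero_le_one : (0:ℝ) ≤ 1) f t) := rfl
  unfold IsC1 at hf ⊢
  rw [heq]
  exact hf.neg

lemma nplusLow_eq (f : UI → ℝ) (c : ℝ) : NplusLow f c = NplusUp (fun y => -f y) c := by
  ext x
  constructor <;> rintro ⟨h1, h2⟩ <;> refine ⟨h1, fun y hy1 hy2 => ?_⟩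
  · have h3 := h2 y hy1 hy2
    show -f y - -f x ≤ c * ((y:ℝ) - (x:ℝ))
    linarith
  · have h3 : -f y - -f x ≤ c * ((y:ℝ) - (x:ℝ)) := h2 y hy1 hy2
    linarith

lemma nminusUp_eq (f : UI → ℝ) (c : ℝ) : NminusUp f c = NminusLow (fun y => -f y) c := by
  ext x
  constructor <;> rintro ⟨h1, h2⟩ <;> refine ⟨h1, fun y hy1 hy2 => ?_⟩
  · have h3 := h2 y hy1 hy2
    show -f y - -f x ≤ -c * ((y:ℝ) - (x:ℝ))
    linarith
  · have h3 : -f y - -f x ≤ -c * ((y:ℝ) - (x:ℝ)) := h2 y hy1 hy2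
    linarith


end NProofAux

/-- If `f ∈ C¹(I)` and `0 < a < b`, then `N̂(f,a) ⊆ Int N̂(f,b)` and
`Ň(f,a) ⊆ Int Ň(f,b)` (interiors relative to `I`). -/
theorem N_subset_interior_of_C1 (f : UI → ℝ) (hf : IsC1 f) (a b : ℝ)
    (ha : 0 < a) (hab : a < b) :
    Nhat f a ⊆ interior (Nhat f b) ∧ Ncheck f a ⊆ interior (Ncheck f b) := by
  constructor
  · exact NProofAux.nhat_subset_interior hf ha hab
  · have h := NProofAux.nhat_subset_interior (NProofAux.isC1_neg hf) ha hab
    have e : ∀ c : ℝ, Ncheck f c = Nhat (fun y => -f y) c := by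
      intro c
      rw [Ncheck, Nhat, NProofAux.nplusLow_eq, NProofAux.nminusUp_eq]
    rw [e a, e b]
    exact h


end
end

section
/- Suppose f is a continuously differentiable function on I and 0 < a < c < b. Then there exists ε > 0 such that for each x ∈ [0, 1−2^{−a}] \ N⁺(f,b), there exists y ∈ (x+ε, x+2^{−b}] with f(y) − f(x) > c(y − x). -/
open Filter Topology TopologicalSpace Set MeasureTheory

noncomputable section

/-- If `f ∈ C¹(I)` and `0 < a < c < b`, then there is `ε > 0` such that for every
`x ∈ [0, 1-2^{-a}] \ N⁺(f,b)` there is `y ∈ (x+ε, x+2^{-b}]` with `f(y)-f(x) > c(y-x)`. -/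
theorem exists_eps_far_point_of_C1 (f : UI → ℝ) (hf : IsC1 f) (a c b : ℝ)
    (ha : 0 < a) (hac : a < c) (hcb : c < b) :
    ∃ ε > 0, ∀ x : UI, (x:ℝ) ≤ 1 - 2^(-a) → x ∉ NplusUp f b →
      ∃ y : UI, (x:ℝ) + ε < (y:ℝ) ∧ (y:ℝ) ≤ (x:ℝ) + 2^(-b) ∧
        c * ((y:ℝ) - (x:ℝ)) < f y - f x := by
  set g : ℝ → ℝ := Set.IccExtend (zero_le_one : (0:ℝ) ≤ 1) f with hgdef
  set φ : ℝ → ℝ := derivWithin g (Set.Icc 0 1) with hφdef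
  have hφc : ContinuousOn φ (Set.Icc 0 1) :=
    hf.continuousOn_derivWithin (uniqueDiffOn_Icc one_pos) le_rfl
  obtain ⟨η, hη, hucη⟩ := Metric.uniformContinuousOn_iff.mp
    (isCompact_Icc.uniformContinuousOn_of_continuous hφc) ((b - c)/2) (by linarith)
  have hderiv : ∀ s ∈ Set.Ioo (0:ℝ) 1, HasDerivAt g (φ s) s := by
    intro s hs
    have hmem : Set.Icc (0:ℝ) 1 ∈ 𝓝 s := Icc_mem_nhds hs.1 hs.2
    have hd : DifferentiableAt ℝ g s :=
      ((hf.differentiableOn one_ne_zero) s (Set.mem_Icc_of_Ioo hs)).differentiableAt hmem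
    rw [hφdef, derivWithin_of_mem_nhds hmem]
    exact hd.hasDerivAt
  have hgc : ContinuousOn g (Set.Icc 0 1) := hf.continuousOn
  have htb : (0:ℝ) < 2^(-b) := Real.rpow_pos_of_pos two_pos _
  have htba : (2:ℝ)^(-b) < 2^(-a) :=
    (Real.rpow_lt_rpow_left_iff (by norm_num : (1:ℝ) < 2)).mpr (by linarith)
  set E : ℝ := min η (2^(-b)) with hEdef
  have hE : 0 < E := lt_min hη htb
  have hEη : E ≤ η := min_le_left _ _
  have hEb : E ≤ 2^(-b) := min_le_right _ _
  refine ⟨E/2, by positivity, ?_⟩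
  intro x hx hxN
  have hx0 : (0:ℝ) ≤ x := x.2.1
  have hx1 : (x:ℝ) + 2^(-b) ≤ 1 := by linarith
  simp only [NplusUp, Set.mem_setOf_eq] at hxN
  push_neg at hxN
  obtain ⟨y, hxy, hyb, hfy⟩ := hxN (by linarith)
  have hy1 : (y:ℝ) ≤ 1 := y.2.2
  have ht : (x:ℝ) < (y:ℝ) := by
    rcases lt_or_eq_of_le hxy with h | h
    · exact h
    · exfalso
      have : x = y := Subtype.coe_injective h
      subst this
      simp at hfy
  -- MVT on [x,y]
  obtain ⟨ξ₁, hξ₁, hξ₁v⟩ := exists_hasDerivAt_eq_slope g φ ht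
    (hgc.mono (by intro s hs; exact ⟨le_trans hx0 hs.1, le_trans hs.2 hy1⟩))
    (fun s hs => hderiv s ⟨lt_of_le_of_lt hx0 hs.1, lt_of_lt_of_le hs.2 hy1⟩)
  have hgx : g (x:ℝ) = f x := Set.IccExtend_val _ f x
  have hgy : g (y:ℝ) = f y := Set.IccExtend_val _ f y
  have hφξ₁ : b < φ ξ₁ := by
    rw [hξ₁v, hgx, hgy, lt_div_iff₀ (by linarith)]
    linarith
  by_cases hcase : (x:ℝ) + E/2 < (y:ℝ)
  · exact ⟨y, hcase, hyb, by nlinarith⟩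
  · push_neg at hcase
    -- y is close to x; take z = x + E
    have hz1 : (x:ℝ) + E ≤ 1 := by linarith
    have hz0 : (0:ℝ) ≤ (x:ℝ) + E := by linarith
    set z : UI := ⟨(x:ℝ) + E, hz0, hz1⟩ with hzdef
    have hzc : (z:ℝ) = (x:ℝ) + E := rfl
    have hyz : (y:ℝ) < (z:ℝ) := by rw [hzc]; linarith
    obtain ⟨ξ₂, hξ₂, hξ₂v⟩ := exists_hasDerivAt_eq_slope g φ hyz
      (hgc.mono (by intro s hs; exact ⟨le_trans (le_trans hx0 hxy) hs.1, le_trans hs.2 z.2.2⟩))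
      (fun s hs => hderiv s ⟨lt_of_le_of_lt (le_trans hx0 hxy) hs.1, lt_of_lt_of_le hs.2 z.2.2⟩)
    have hgz : g (z:ℝ) = f z := Set.IccExtend_val _ f z
    have hξ₁I : ξ₁ ∈ Set.Icc (0:ℝ) 1 := ⟨le_trans hx0 (le_of_lt hξ₁.1), le_trans (le_of_lt hξ₁.2) hy1⟩
    have hξ₂I : ξ₂ ∈ Set.Icc (0:ℝ) 1 := ⟨le_trans (le_trans hx0 hxy) (le_of_lt hξ₂.1), le_trans (le_of_lt hξ₂.2) z.2.2⟩
    have hdist : dist ξ₁ ξ₂ < η := by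
      rw [Real.dist_eq, abs_lt]
      have h1 : (x:ℝ) < ξ₁ := hξ₁.1
      have h2 : ξ₁ < (y:ℝ) := hξ₁.2
      have h3 : (y:ℝ) < ξ₂ := hξ₂.1
      have h4 : ξ₂ < (z:ℝ) := hξ₂.2
      rw [hzc] at h4
      constructor <;> nlinarith
    have hφξ₂ : (b + c)/2 < φ ξ₂ := by
      have := hucη ξ₁ hξ₁I ξ₂ hξ₂I hdist
      rw [Real.dist_eq, abs_lt] at this
      linarith
    have hzy : (0:ℝ) < (z:ℝ) - (y:ℝ) := by linarith
    have hslope : g (z:ℝ) - g (y:ℝ) = φ ξ₂ * ((z:ℝ) - (y:ℝ)) := by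
      rw [hξ₂v, div_mul_cancel₀ _ (ne_of_gt hzy)]
    rw [hgy, hgz] at hslope
    refine ⟨z, by rw [hzc]; linarith, by rw [hzc]; linarith, ?_⟩
    have h1 := mul_lt_mul_of_pos_right hφξ₂ hzy
    have h2 : c * ((z:ℝ) - (y:ℝ)) < (b + c)/2 * ((z:ℝ) - (y:ℝ)) :=
      mul_lt_mul_of_pos_right (by linarith) hzy
    have h3 : c * ((y:ℝ) - (x:ℝ)) < b * ((y:ℝ) - (x:ℝ)) :=
      mul_lt_mul_of_pos_right (by linarith) (by linarith)
    have h4 : c * ((z:ℝ) - (x:ℝ)) = c * ((z:ℝ) - (y:ℝ)) + c * ((y:ℝ) - (x:ℝ)) := by ring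
    have h5 : f z - f x = (f z - f y) + (f y - f x) := by ring
    rw [h4, h5, hslope]
    clear_value z E
    linarith


end
end
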